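/- Let MΣ = (P, Σ, V, MV) be a CQ weakly acyclic materialized-view setting. Then MΣ is valid — i.e., there exists a ground instance I of P with I ⊨ Σ and V(I) = MV[V] for each view V ∈ V — if and only if the set J^{MΣ}_{vv} of view-verified universal solutions for MΣ is nonempty. -/

import Mathlib

namespace CertainViews

/-! ### Values, terms, schemas, instances -/

/-- Values: constants and labeled nulls. -/
inductive Val : Type
  | const : ℕ → Val
  | null : ℕ → Val
deriving DecidableEq

/-- A value is a constant. -/
def Val.IsConst (a : Val) : Prop := ∃ c, a = Val.const c

/-- Terms of queries and dependencies: query variables and constants. -/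
inductive Term : Type
  | var : ℕ → Term
  | const : ℕ → Term
deriving DecidableEq

/-- Evaluation of a term under an assignment of values to variables
(constants are fixed, as in homomorphisms/valuations). -/
def Term.eval (ν : ℕ → Val) : Term → Val
  | .var x => ν x
  | .const c => .const c

/-- A relational schema: a collection of relation symbols, each with a fixed arity. -/
structure Schema : Type 1 where
  rel : Type
  arity : rel → ℕ

variable {S : Schema}

/-- An instance of a schema assigns a relation (a set of tuples of values)
to each relation symbol. -/
structure Inst (S : Schema) : Type where
  rels : ∀ r : S.rel, Set (Fin (S.arity r) → Val)

/-- The facts of an instance, as a set of (relation symbol, tuple) pairs. -/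
def Inst.facts (I : Inst S) : Set ((r : S.rel) × (Fin (S.arity r) → Val)) :=
  { p | p.2 ∈ I.rels p.1 }

/-- The instance determined by a set of facts. -/
def Inst.ofFacts (F : Set ((r : S.rel) × (Fin (S.arity r) → Val))) : Inst S :=
  ⟨fun r => { t | (⟨r, t⟩ : (r : S.rel) × (Fin (S.arity r) → Val)) ∈ F }⟩

/-- A ground instance contains only constants. -/
def Inst.Ground (I : Inst S) : Prop :=
  ∀ r, ∀ t ∈ I.rels r, ∀ i, (t i).IsConst

/-- The active domain of an instance. -/
def Inst.adom (I : Inst S) : Set Val :=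
  { a | ∃ p ∈ I.facts, ∃ i, p.2 i = a }

/-- Applying a mapping on values to all facts of an instance. -/
def Inst.map (ρ : Val → Val) (I : Inst S) : Inst S :=
  Inst.ofFacts ((fun p : (r : S.rel) × (Fin (S.arity r) → Val) =>
    (⟨p.1, fun i => ρ (p.2 i)⟩ : (r : S.rel) × (Fin (S.arity r) → Val))) '' I.facts)

/-- A homomorphism between instances: a mapping of values fixing constants
that sends facts to facts. -/
def InstHom (J I : Inst S) : Prop :=
  ∃ ρ : Val → Val, (∀ c, ρ (Val.const c) = Val.const c) ∧
    ∀ p ∈ J.facts, (⟨p.1, fun i => ρ (p.2 i)⟩ : (r : S.rel) × (Fin (S.arity r) → Val)) ∈ I.facts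

/-! ### Atoms, conjunctive queries -/

/-- A relational atom over a schema. -/
structure Atom (S : Schema) : Type where
  rel : S.rel
  args : Fin (S.arity rel) → Term

/-- Applying a term mapping to an atom. -/
def Atom.mapTerms (f : Term → Term) (A : Atom S) : Atom S :=
  ⟨A.rel, fun i => f (A.args i)⟩

/-- The variables occurring in a list of atoms. -/
def BodyVars (B : List (Atom S)) : Set ℕ :=
  { x | ∃ A ∈ B, ∃ j, A.args j = Term.var x }

/-- A conjunction of atoms holds in an instance under a valuation. -/
def BodyHolds (ν : ℕ → Val) (B : List (Atom S)) (I : Inst S) : Prop :=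
  ∀ A ∈ B, (fun i => (A.args i).eval ν) ∈ I.rels A.rel

/-- The set of facts obtained by applying a valuation to a list of atoms. -/
def factSet (B : List (Atom S)) (ν : ℕ → Val) : Set ((r : S.rel) × (Fin (S.arity r) → Val)) :=
  { p | ∃ A ∈ B, p = ⟨A.rel, fun i => (A.args i).eval ν⟩ }

/-- A conjunctive query (`CQ` query) of arity `k`: a head vector of terms
and a body that is a finite conjunction of relational atoms. -/
structure CQ (S : Schema) (k : ℕ) : Type where
  head : Fin k → Term
  body : List (Atom S)

/-- Safety of a CQ query: the body is nonempty and every head variable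
occurs in the body. -/
def CQ.Safe {k : ℕ} (Q : CQ S k) : Prop :=
  Q.body ≠ [] ∧ ∀ x, (∃ i, Q.head i = Term.var x) → ∃ A ∈ Q.body, ∃ j, A.args j = Term.var x

/-- The answer to a CQ query on an instance: images of the head vector
under all valuations from the body to the instance. -/
def CQ.answer {k : ℕ} (Q : CQ S k) (I : Inst S) : Set (Fin k → Val) :=
  { t | ∃ ν : ℕ → Val, BodyHolds ν Q.body I ∧ t = fun i => (Q.head i).eval ν }

/-- The constants occurring in a CQ query. -/
def CQ.consts {k : ℕ} (Q : CQ S k) : Set ℕ :=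
  { c | (∃ i, Q.head i = Term.const c) ∨ ∃ A ∈ Q.body, ∃ j, A.args j = Term.const c }

/-- A query of arity `k` in an arbitrary query language, identified with its semantics. -/
def GenQuery (S : Schema) (k : ℕ) : Type := Inst S → Set (Fin k → Val)

/-- The tuple of constants corresponding to a tuple of natural numbers. -/
def constTuple {k : ℕ} (t : Fin k → ℕ) : Fin k → Val := fun i => Val.const (t i)


/-! ### Embedded dependencies: tgds and egds -/

/-- A tuple-generating dependency (tgd)
`∀ x̄ ȳ (φ(x̄,ȳ) → ∃ z̄ ψ(x̄,z̄))`: the body is `φ`; the head is `ψ`; the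
existential variables are the head variables not occurring in the body. -/
structure TGD (S : Schema) : Type where
  body : List (Atom S)
  head : List (Atom S)

/-- Satisfaction of a tgd in an instance. -/
def TGD.holds (σ : TGD S) (I : Inst S) : Prop :=
  ∀ ν : ℕ → Val, BodyHolds ν σ.body I →
    ∃ ν' : ℕ → Val, (∀ x ∈ BodyVars σ.body, ν' x = ν x) ∧ BodyHolds ν' σ.head I

/-- An equality-generating dependency (egd) `∀ x̄ (φ(x̄) → x₁ = x₂)`. -/
structure EGD (S : Schema) : Type where
  body : List (Atom S)
  lhs : ℕ
  rhs : ℕ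

/-- Satisfaction of an egd in an instance. -/
def EGD.holds (σ : EGD S) (I : Inst S) : Prop :=
  ∀ ν : ℕ → Val, BodyHolds ν σ.body I → ν σ.lhs = ν σ.rhs

/-- An embedded dependency: a tgd or an egd. -/
inductive Dep (S : Schema) : Type
  | tgd : TGD S → Dep S
  | egd : EGD S → Dep S

def Dep.holds : Dep S → Inst S → Prop
  | .tgd σ, I => σ.holds I
  | .egd σ, I => σ.holds I

/-- An instance satisfies a set of dependencies. -/
def Inst.satisfiesAll (I : Inst S) (D : Set (Dep S)) : Prop := ∀ d ∈ D, d.holds I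

/-- An atom contains no constants. -/
def Atom.ConstantFree (A : Atom S) : Prop := ∀ i, ∃ x, A.args i = Term.var x

/-- A dependency without constants. -/
def Dep.ConstantFree : Dep S → Prop
  | .tgd σ => (∀ A ∈ σ.body, A.ConstantFree) ∧ (∀ A ∈ σ.head, A.ConstantFree)
  | .egd σ => ∀ A ∈ σ.body, A.ConstantFree

/-! ### Weak acyclicity -/

/-- A position of a schema: a relation symbol together with an attribute index. -/
def Pos (S : Schema) : Type := S.rel × ℕ

/-- Variable `x` occurs in the list of atoms `B` at position `p`. -/
def OccursAt (B : List (Atom S)) (x : ℕ) (p : Pos S) : Prop :=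
  ∃ A ∈ B, A.rel = p.1 ∧ ∃ i : Fin (S.arity A.rel), (i : ℕ) = p.2 ∧ A.args i = Term.var x

/-- Regular edge of the dependency graph, induced by a tgd. -/
def TGD.RegularEdge (σ : TGD S) (p q : Pos S) : Prop :=
  ∃ x, OccursAt σ.body x p ∧ x ∈ BodyVars σ.head ∧ OccursAt σ.head x q

/-- Special edge of the dependency graph, induced by a tgd. -/
def TGD.SpecialEdge (σ : TGD S) (p q : Pos S) : Prop :=
  ∃ x y, OccursAt σ.body x p ∧ x ∈ BodyVars σ.head ∧
    y ∈ BodyVars σ.head ∧ y ∉ BodyVars σ.body ∧ OccursAt σ.head y q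

/-- An edge (regular or special) of the dependency graph of a set of dependencies. -/
def DepEdge (D : Set (Dep S)) (p q : Pos S) : Prop :=
  ∃ σ : TGD S, Dep.tgd σ ∈ D ∧ (σ.RegularEdge p q ∨ σ.SpecialEdge p q)

/-- A set of tgds and egds is weakly acyclic iff the dependency graph of its
tgds has no cycle going through a special edge. -/
def WeaklyAcyclic (D : Set (Dep S)) : Prop :=
  ¬ ∃ (σ : TGD S) (p q : Pos S), Dep.tgd σ ∈ D ∧ σ.SpecialEdge p q ∧
      Relation.ReflTransGen (DepEdge D) q p



/-! ### Views and materialized-view settings -/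

/-- A finite set of views over a schema `S`: view names with arities,
each defined by a (safe) CQ query over `S`. -/
structure Views (S : Schema) : Type 1 where
  idx : Type
  finite : Finite idx
  arity : idx → ℕ
  defn : ∀ v : idx, CQ S (arity v)
  safe : ∀ v, (defn v).Safe

/-- The view schema determined by a set of views. -/
def Views.schema {S : Schema} (V : Views S) : Schema := ⟨V.idx, V.arity⟩

/-- The image of an instance under a set of views: the instance of the view
schema assigning to each view the answer of its defining query. -/
def Views.image {S : Schema} (V : Views S) (I : Inst S) : Inst V.schema :=
  ⟨fun v => (V.defn v).answer I⟩

/-- The fixed part of a materialized-view setting: a schema `P`, a finite set `Σ`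
of embedded dependencies without constants on `P`, and a set `V` of CQ views on `P`. -/
structure Frame : Type 1 where
  S : Schema
  deps : Set (Dep S)
  depsFinite : deps.Finite
  depsConstantFree : ∀ d ∈ deps, d.ConstantFree
  views : Views S

/-- A (CQ) materialized-view setting `MΣ = (P, Σ, V, MV)`:
a frame together with a finite ground instance `MV` of the view schema. -/
structure MVSetting : Type 1 extends Frame where
  mv : Inst views.schema
  mvGround : mv.Ground
  mvFinite : mv.facts.Finite

/-- `V ⇒_{I,Σ} MV`: the ground instance `I` is a `Σ`-valid base instance
for `V` and `MV` (closed-world assumption). -/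
def MVSetting.ValidBase (M : MVSetting) (I : Inst M.S) : Prop :=
  I.Ground ∧ I.satisfiesAll M.deps ∧ ∀ v, (M.views.defn v).answer I = M.mv.rels v

/-- A materialized-view setting is valid iff some `Σ`-valid base instance exists. -/
def MVSetting.Valid (M : MVSetting) : Prop := ∃ I, M.ValidBase I

/-- The set of certain answers of a query w.r.t. a materialized-view setting. -/
def MVSetting.certain (M : MVSetting) {k : ℕ} (Q : GenQuery M.S k) : Set (Fin k → Val) :=
  { t | ∀ I, M.ValidBase I → t ∈ Q I }

/-- `consts(MΣ)`: the constants occurring in `MV` or in the view definitions. -/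
def MVSetting.consts (M : MVSetting) : Set ℕ :=
  { c | (∃ p ∈ M.mv.facts, ∃ i, p.2 i = Val.const c) ∨ ∃ v, c ∈ (M.views.defn v).consts }

/-- `MΣ`-conditional containment of queries: `Q₁(I) ⊆ Q₂(I)` for every
`Σ`-valid base instance `I` for `V` and `MV`. -/
def MVSetting.CondContained (M : MVSetting) {k : ℕ} (Q1 Q2 : GenQuery M.S k) : Prop :=
  ∀ I, M.ValidBase I → Q1 I ⊆ Q2 I

/-- The expansion query `Q₁(t̄) ← C^exp_MV`, where `C^exp_MV` is the expansion of
`MV` over the base schema: each fact of `MV` is replaced by the body of the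
corresponding view definition, with head variables bound to the constants of the
fact and with nonhead variables renamed apart across the facts.  Since the
variables are renamed apart, its answer on an instance `I` is `{t̄}` exactly
when every fact of `MV` is an answer to the corresponding view on `I`
(and is empty otherwise). -/
def MVSetting.expansionQuery (M : MVSetting) {k : ℕ} (t : Fin k → ℕ) : GenQuery M.S k :=
  fun I => { u | u = constTuple t ∧ ∀ v, M.mv.rels v ⊆ (M.views.defn v).answer I }


/-! ### Rewritings in terms of the views -/

/-- Substitution of terms for variables in a term. -/
def Term.subst (h : ℕ → Term) : Term → Term
  | .var x => h x
  | .const c => .const c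

/-- The term corresponding to a value (constants to constants, nulls to variables). -/
def Val.toTerm : Val → Term
  | .const c => .const c
  | .null n => .var n

/-- `R^exp` exists and is the query `E` over the base schema:
an expansion of a rewriting `R` over the view schema is a query `E` whose
answer on every base instance is the answer of `R` on the view image. -/
def IsExpansion {S : Schema} (V : Views S) {k : ℕ} (R : GenQuery V.schema k)
    (E : GenQuery S k) : Prop :=
  ∀ I, E I = R (V.image I)

/-- The expansion `R^exp` over the base schema of a CQ rewriting `R` over the views
of a setting, given by its semantics `R^exp(I) = R(I^{(+V)})`. -/
def MVSetting.expQuery (M : MVSetting) {k : ℕ} (R : CQ M.views.schema k) : GenQuery M.S k :=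
  fun I => R.answer (M.views.image I)

/-- `R ⊑_{Σ,MV,V} Q`: the rewriting `R` is `Σ`-conditionally contained in `Q`
w.r.t. `MV` and modulo `V`, i.e., `R^exp(I) ⊆ Q(I)` for every `Σ`-valid base
instance `I` for `V` and `MV`. -/
def MVSetting.RewContained (M : MVSetting) {k : ℕ} (R : CQ M.views.schema k)
    (Q : GenQuery M.S k) : Prop :=
  ∀ I, M.ValidBase I → M.expQuery R I ⊆ Q I

/-- A head-instantiated rewriting for a ground tuple `t̄`: a safe CQ query over the
view schema with head vector `t̄`, obtained from some safe CQ query with a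
constant-free head vector by instantiating its head variables to constants
(mapping all remaining terms to themselves). -/
def IsHeadInstantiated (M : MVSetting) {k : ℕ} (t : Fin k → ℕ)
    (R : CQ M.views.schema k) : Prop :=
  R.Safe ∧ (∀ i, R.head i = Term.const (t i)) ∧
  ∃ Rg : CQ M.views.schema k, Rg.Safe ∧ (∀ i, ∃ x, Rg.head i = Term.var x) ∧
    ∃ h : ℕ → Term,
      (∀ x, (∃ i, Rg.head i = Term.var x) → ∃ c, h x = Term.const c) ∧
      (∀ x, (¬ ∃ i, Rg.head i = Term.var x) → h x = Term.var x) ∧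
      R.head = (fun i => (Rg.head i).subst h) ∧
      R.body = Rg.body.map (Atom.mapTerms (Term.subst h))

/-- A rewriting `R` is `MV`-validated iff its answer on `MV` is nonempty. -/
def MVValidated (M : MVSetting) {k : ℕ} (R : CQ M.views.schema k) : Prop :=
  (R.answer M.mv).Nonempty

/-- The atom over the view schema corresponding to a fact of `MV`. -/
def MVSetting.factAtom (M : MVSetting) (v : M.views.idx)
    (tv : Fin (M.views.arity v) → Val) : Atom M.views.schema :=
  ⟨v, fun i => (tv i).toTerm⟩

/-- An `MV`-induced rewriting for `t̄`: a CQ rewriting with head vector `t̄`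
each of whose subgoals is a fact of `MV`. -/
def IsMVInduced (M : MVSetting) {k : ℕ} (t : Fin k → ℕ) (R : CQ M.views.schema k) : Prop :=
  (∀ i, R.head i = Term.const (t i)) ∧
  ∀ A ∈ R.body, ∃ v, ∃ tv ∈ M.mv.rels v, A = M.factAtom v tv

/-- A maximal `MV`-induced rewriting for `t̄`: an `MV`-induced rewriting for `t̄`
having every fact of `MV` as a subgoal. -/
def IsMaxMVInduced (M : MVSetting) {k : ℕ} (t : Fin k → ℕ) (R : CQ M.views.schema k) : Prop :=
  IsMVInduced M t R ∧ ∀ v, ∀ tv ∈ M.mv.rels v, M.factAtom v tv ∈ R.body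


/-! ### Data exchange: canonical solutions and instance chase -/

/-- The solutions of the data-exchange setting `S^{(de)}(MΣ) = (V, P, Σ_st ∪ Σ)`
associated with a setting `MΣ`, for the source instance `MV`: a target instance `J`
such that `(MV, J)` satisfies the source-to-target tgds
`V(x̄) → ∃ȳ body_V(x̄,ȳ)` (for each view `V`) and the target dependencies `Σ`. -/
def MVSetting.DESolution (M : MVSetting) (J : Inst M.S) : Prop :=
  J.satisfiesAll M.deps ∧ ∀ v, M.mv.rels v ⊆ (M.views.defn v).answer J

/-- A (standard) instance-chase step with a tgd: an applicable trigger whose head is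
added with fresh distinct nulls for the existential variables. -/
def tgdStep {S : Schema} (σ : TGD S) (J J' : Inst S) : Prop :=
  ∃ h : ℕ → Val, BodyHolds h σ.body J ∧
    ¬ (∃ g : ℕ → Val, (∀ x ∈ BodyVars σ.body, g x = h x) ∧ BodyHolds g σ.head J) ∧
    ∃ h' : ℕ → Val, (∀ x ∈ BodyVars σ.body, h' x = h x) ∧
      (∀ x ∈ BodyVars σ.head, x ∉ BodyVars σ.body →
        (∃ n, h' x = Val.null n) ∧ h' x ∉ J.adom) ∧
      Set.InjOn h' { x | x ∈ BodyVars σ.head ∧ x ∉ BodyVars σ.body } ∧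
      J' = Inst.ofFacts (J.facts ∪ factSet σ.head h')

/-- A successful instance-chase step with an egd: a violating trigger in which at
least one of the two values is a null, which is then replaced by the other value. -/
def egdStepOk {S : Schema} (σ : EGD S) (J J' : Inst S) : Prop :=
  ∃ h : ℕ → Val, BodyHolds h σ.body J ∧ h σ.lhs ≠ h σ.rhs ∧
    (((∃ n, h σ.lhs = Val.null n) ∧
        J' = J.map (fun a => if a = h σ.lhs then h σ.rhs else a)) ∨
     ((∃ n, h σ.rhs = Val.null n) ∧
        J' = J.map (fun a => if a = h σ.rhs then h σ.lhs else a)))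

/-- A failing instance-chase step with an egd: a violating trigger equating two
distinct constants. -/
def egdStepFail {S : Schema} (σ : EGD S) (J : Inst S) : Prop :=
  ∃ h : ℕ → Val, BodyHolds h σ.body J ∧ h σ.lhs ≠ h σ.rhs ∧
    (h σ.lhs).IsConst ∧ (h σ.rhs).IsConst

/-- A successful chase step with some dependency of a set. -/
def depStepTo {S : Schema} (D : Set (Dep S)) (J J' : Inst S) : Prop :=
  (∃ σ : TGD S, Dep.tgd σ ∈ D ∧ tgdStep σ J J') ∨
  (∃ σ : EGD S, Dep.egd σ ∈ D ∧ egdStepOk σ J J')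

/-- `J` is a (terminal) result of chasing `J0` with the dependencies `D`. -/
def ChaseResult {S : Schema} (D : Set (Dep S)) (J0 J : Inst S) : Prop :=
  Relation.ReflTransGen (depStepTo D) J0 J ∧ J.satisfiesAll D

/-- The result of chasing the source instance `MV` with the source-to-target tgds
`Σ_st` of the associated data-exchange setting: for each fact `t ∈ MV[V]`, the body
of the view definition of `V` is added, with the head variables bound to `t` and
with fresh, globally distinct nulls for the nonhead variables. -/
def MVSetting.IsPreSolution (M : MVSetting) (J : Inst M.S) : Prop :=
  ∃ ν : (v : M.views.idx) → (Fin (M.views.arity v) → Val) → ℕ → Val,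
    (∀ v, ∀ t ∈ M.mv.rels v, ∀ i, ((M.views.defn v).head i).eval (ν v t) = t i) ∧
    (∀ v, ∀ t ∈ M.mv.rels v, ∀ x ∈ BodyVars (M.views.defn v).body,
      (¬ ∃ i, (M.views.defn v).head i = Term.var x) → ∃ n, ν v t x = Val.null n) ∧
    (∀ v v' t t' x x', t ∈ M.mv.rels v → t' ∈ M.mv.rels v' →
      x ∈ BodyVars (M.views.defn v).body →
      (¬ ∃ i, (M.views.defn v).head i = Term.var x) →
      x' ∈ BodyVars (M.views.defn v').body →
      (¬ ∃ i, (M.views.defn v').head i = Term.var x') →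
      ν v t x = ν v' t' x' → v = v' ∧ HEq t t' ∧ x = x') ∧
    J.facts = ⋃ v, ⋃ t ∈ M.mv.rels v, factSet (M.views.defn v).body (ν v t)

/-- `J_de^{MΣ}`: a canonical universal solution for the source instance `MV` in the
data-exchange setting associated with `MΣ`, i.e., a terminal result of chasing `MV`
with `Σ_st ∪ Σ`. -/
def MVSetting.IsCanonicalSolution (M : MVSetting) (J : Inst M.S) : Prop :=
  ∃ J0, M.IsPreSolution J0 ∧ ChaseResult M.deps J0 J

/-! ### MV-enhanced chase (view-verified data exchange) -/

/-- Applying, to an instance, the conjunction of equalities forcing the values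
`vals j` to become the values `tgt j` (a disjunct of an `MV`-induced disjunctive
egd): succeeds iff there is a substitution fixing the constants and all other
values that realizes the equalities. -/
def substResult {S : Schema} (J J' : Inst S) {k : ℕ} (vals tgt : Fin k → Val) : Prop :=
  ∃ ρ : Val → Val, (∀ c, ρ (Val.const c) = Val.const c) ∧
    (∀ a, (∀ j, a ≠ vals j) → ρ a = a) ∧ (∀ j, ρ (vals j) = tgt j) ∧ J' = J.map ρ

/-- The values of the head vector of a CQ under a valuation. -/
def headVals {S : Schema} {k : ℕ} (Q : CQ S k) (h : ℕ → Val) : Fin k → Val :=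
  fun i => (Q.head i).eval h

/-- The set of results of one chase step with the `MV`-induced generalized egd of a
view `v` on an instance `J` (with trigger `h`): one (successful) result for each
tuple of `MV[v]`, or the empty instance `ε` (here: `none`) if all disjuncts fail. -/
def MVSetting.gedResults (M : MVSetting) (v : M.views.idx) (J : Inst M.S)
    (h : ℕ → Val) : Set (Option (Inst M.S)) :=
  { o | (∃ t ∈ M.mv.rels v, ∃ J', o = some J' ∧
           substResult J J' (headVals (M.views.defn v) h) t)
      ∨ (o = none ∧ ∀ t ∈ M.mv.rels v,
           ¬ ∃ J', substResult J J' (headVals (M.views.defn v) h) t) }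

/-- The step system of the `MV`-enhanced chase with `Σ ∪ Σ^{(MΣ)}` on instances:
to each node (an instance, or the empty instance `ε` = `none`) it assigns the
possible chase steps, each step being the set of its results.  The steps are:
chase steps with the tgds and egds of `Σ`; steps with the `MV`-induced implication
constraint `body_V → false` of each view `V` with `MV[V] = ∅`; and steps with the
`MV`-induced disjunctive egd `body_V(x̄,ȳ) → ⋁_i (x̄ = t̄ᵢ)` of each view `V` of
positive arity with `MV[V] ≠ ∅`. -/
def MVSetting.mvChaseSteps (M : MVSetting) :
    Option (Inst M.S) → Set (Set (Option (Inst M.S)))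
  | none => ∅
  | some J =>
    { C | (∃ σ : TGD M.S, Dep.tgd σ ∈ M.deps ∧ ∃ J', tgdStep σ J J' ∧ C = {some J'})
        ∨ (∃ σ : EGD M.S, Dep.egd σ ∈ M.deps ∧ ∃ J', egdStepOk σ J J' ∧ C = {some J'})
        ∨ (∃ σ : EGD M.S, Dep.egd σ ∈ M.deps ∧ egdStepFail σ J ∧
             C = {(none : Option (Inst M.S))})
        ∨ (∃ v, M.mv.rels v = ∅ ∧ (∃ h, BodyHolds h (M.views.defn v).body J) ∧
             C = {(none : Option (Inst M.S))})
        ∨ (∃ v, (M.mv.rels v).Nonempty ∧ 1 ≤ M.views.arity v ∧ ∃ h : ℕ → Val,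
             BodyHolds h (M.views.defn v).body J ∧
             (∀ t ∈ M.mv.rels v, ∃ i, headVals (M.views.defn v) h i ≠ t i) ∧
             C = M.gedResults v J h) }

/-- One edge of the MV-enhanced chase: passing from a node to one of the results of
an applicable chase step. -/
def MVSetting.mvStep (M : MVSetting) (a b : Option (Inst M.S)) : Prop :=
  ∃ C ∈ M.mvChaseSteps a, b ∈ C

/-- Reachability along MV-enhanced chase steps. -/
def MVSetting.mvReach (M : MVSetting) : Option (Inst M.S) → Option (Inst M.S) → Prop :=
  Relation.ReflTransGen M.mvStep

/-- A view-verified universal solution for `MΣ`: a nonempty leaf of a (finite)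
MV-enhanced chase of a canonical universal solution `J_de^{MΣ}` with
`Σ ∪ Σ^{(MΣ)}`, i.e., a terminal nonempty instance reachable from `J_de^{MΣ}`. -/
def MVSetting.IsVVSolution (M : MVSetting) (J : Inst M.S) : Prop :=
  ∃ Jde, M.IsCanonicalSolution Jde ∧ M.mvReach (some Jde) (some J) ∧
    M.mvChaseSteps (some J) = ∅

/-- A grounded version of an instance `J`: the result of consistently replacing all
its nulls with distinct new constants (avoiding the constants in `avoid`). -/
def GroundedVersion {S : Schema} (avoid : Set ℕ) (J J' : Inst S) : Prop :=
  ∃ ρ : Val → Val, (∀ c, ρ (Val.const c) = Val.const c) ∧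
    (∀ n, ∃ c, ρ (Val.null n) = Val.const c ∧ c ∉ avoid ∧ Val.const c ∉ J.adom) ∧
    Set.InjOn ρ J.adom ∧ J' = J.map ρ

/-- Chains of a given length for a binary relation. -/
def chainOfLength {α : Type*} (R : α → α → Prop) : ℕ → α → α → Prop
  | 0, a, b => a = b
  | n + 1, a, b => ∃ c, R a c ∧ chainOfLength R n c b


/-! ### Finitely-branching rooted trees, for chase trees -/

/-- Finite rooted trees with labels in `β`. -/
inductive RTree (β : Type) : Type
  | node : β → List (RTree β) → RTree β

namespace RTree

variable {β : Type}

/-- The label of the root. -/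
def label : RTree β → β
  | .node b _ => b

mutual
  /-- The depth of a tree (a single node has depth 1). -/
  def depth : RTree β → ℕ
    | .node _ ts => depthL ts + 1
  def depthL : List (RTree β) → ℕ
    | [] => 0
    | t :: ts => max (depth t) (depthL ts)
end

mutual
  /-- The number of leaves of a tree. -/
  def leafCount : RTree β → ℕ
    | .node _ [] => 1
    | .node _ (t :: ts) => leafCount t + leafCountL ts
  def leafCountL : List (RTree β) → ℕ
    | [] => 0
    | t :: ts => leafCount t + leafCountL ts
end

mutual
  /-- The list of labels of the leaves of a tree. -/
  def leaves : RTree β → List β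
    | .node b [] => [b]
    | .node _ (t :: ts) => leaves t ++ leavesL ts
  def leavesL : List (RTree β) → List β
    | [] => []
    | t :: ts => leaves t ++ leavesL ts
end

/-- The labels of a list of trees, as a set. -/
def labelsOf (ts : List (RTree β)) : Set β := { b | ∃ t ∈ ts, label t = b }

mutual
  /-- A chase tree for a disjunctive-step system `D` (assigning to each node label
  the set of possible chase steps, each step given by the set of its results):
  each inner node's children are exactly the results of one applicable chase step,
  and leaves are exactly the nodes to which no chase step applies. -/
  def Valid (D : β → Set (Set β)) : RTree β → Prop
    | .node b ts => (D b = ∅ ∧ ts = []) ∨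
        (∃ C ∈ D b, labelsOf ts = C ∧ ValidL D ts)
  def ValidL (D : β → Set (Set β)) : List (RTree β) → Prop
    | [] => True
    | t :: ts => Valid D t ∧ ValidL D ts
end

end RTree





/-! ### CQ queries with disequalities and unions thereof -/

/-- A `CQ^≠` query: a CQ query whose body may also contain disequality atoms. -/
structure CQNeq (S : Schema) (k : ℕ) : Type where
  head : Fin k → Term
  body : List (Atom S)
  diseqs : List (Term × Term)

/-- The answer to a `CQ^≠` query on an instance (via valuations: homomorphisms
from the relational atoms that satisfy all the disequalities). -/
def CQNeq.answer {k : ℕ} (Q : CQNeq S k) (I : Inst S) : Set (Fin k → Val) :=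
  { t | ∃ ν : ℕ → Val, BodyHolds ν Q.body I ∧
      (∀ p ∈ Q.diseqs, p.1.eval ν ≠ p.2.eval ν) ∧ t = fun i => (Q.head i).eval ν }

/-- The answer to a `UCQ^≠` query (a finite set of `CQ^≠` components; the
trivial query `[]` has empty answer on every instance). -/
def ucqAnswer {k : ℕ} (R : List (CQNeq S k)) (I : Inst S) : Set (Fin k → Val) :=
  { t | ∃ q ∈ R, t ∈ q.answer I }

/-- The terms occurring in a `CQ^≠` query. -/
def CQNeq.terms {k : ℕ} (Q : CQNeq S k) : Set Term :=
  { u | (∃ i, Q.head i = u) ∨ (∃ A ∈ Q.body, ∃ j, A.args j = u) ∨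
        (∃ p ∈ Q.diseqs, p.1 = u ∨ p.2 = u) }

/-- Applying a term mapping to a `CQ^≠` query. -/
def CQNeq.mapTerms {k : ℕ} (θ : Term → Term) (Q : CQNeq S k) : CQNeq S k :=
  ⟨fun i => θ (Q.head i), Q.body.map (Atom.mapTerms θ), Q.diseqs.map fun p => (θ p.1, θ p.2)⟩

/-- The query has the disequality atom `a ≠ b` (in either orientation). -/
def CQNeq.hasDiseq {k : ℕ} (Q : CQNeq S k) (a b : Term) : Prop :=
  (a, b) ∈ Q.diseqs ∨ (b, a) ∈ Q.diseqs

/-- A homomorphism (on the query level) from a conjunction of atoms into the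
body of a `CQ^≠` query. -/
def homTo {k : ℕ} (h : ℕ → Term) (B : List (Atom S)) (Q : CQNeq S k) : Prop :=
  ∀ A ∈ B, A.mapTerms (Term.subst h) ∈ Q.body

/-- The size of an atom. -/
def Atom.size (A : Atom S) : ℕ := 1 + S.arity A.rel

/-- The size of a CQ query. -/
def CQSize {k : ℕ} (_head : Fin k → Term) (body : List (Atom S)) : ℕ :=
  k + (body.map Atom.size).sum

def CQ.size {k : ℕ} (Q : CQ S k) : ℕ := CQSize Q.head Q.body
def CQNeq.size {k : ℕ} (Q : CQNeq S k) : ℕ := CQSize Q.head Q.body + Q.diseqs.length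

/-! ### Normalization of conjunctions of atoms -/

/-- The original (renamed-apart) copy of a term: variable `x` becomes `2x`,
so that the fresh variables introduced by normalization (odd numbers) are new. -/
def Term.orig : Term → Term
  | .var x => .var (2 * x)
  | .const c => .const c

/-- The original (renamed) copy of an atom. -/
def Atom.orig (A : Atom S) : Atom S := A.mapTerms Term.orig

/-- The argument list of an atom. -/
def Atom.argsList (A : Atom S) : List Term := List.ofFn A.args

/-- The term in position `(j, i)` of a list of atoms, if any. -/
def atomArg? (B : List (Atom S)) (j i : ℕ) : Option Term :=
  match B[j]? with
  | none => none
  | some A => A.argsList[i]?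

/-- Whether the occurrence at position `(j, i)` is a duplicate occurrence,
i.e., the same variable or constant already occurs at an earlier position. -/
def isDup (B : List (Atom S)) (j i : ℕ) : Bool :=
  match atomArg? B j i with
  | none => false
  | some u =>
      (List.range B.length).any fun j' =>
        match B[j']? with
        | none => false
        | some A' =>
            (List.range A'.argsList.length).any fun i' =>
              (decide (j' < j) || (decide (j' = j) && decide (i' < i))) &&
              decide (A'.argsList[i']? = some u)

/-- The fresh variable replacing the duplicate occurrence at position `(j, i)`. -/
def freshVar (j i : ℕ) : Term := Term.var (2 * Nat.pair j i + 1)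

/-- The normalized copy of the atom at index `j` of `B`: each duplicate occurrence
of a variable or constant is replaced by a fresh distinct variable. -/
def normAtom (B : List (Atom S)) (j : ℕ) (A : Atom S) : Atom S :=
  ⟨A.rel, fun i => if isDup B j (i : ℕ) then freshVar j (i : ℕ) else (A.args i).orig⟩

/-- `ℛ(φ⁽ⁿ⁾)`: the relational part of the normalized version of a conjunction of
atoms. -/
def normBody (B : List (Atom S)) : List (Atom S) :=
  (B.zipIdx.map Prod.swap).map fun p => normAtom B p.1 p.2

/-- `ℰ(φ⁽ⁿ⁾)`: the equality atoms of the normalized version, equating each fresh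
variable with the term it replaced. -/
def normEqs (B : List (Atom S)) : List (Term × Term) :=
  ((B.zipIdx.map Prod.swap).map fun p =>
    (p.2.argsList.zipIdx.map Prod.swap).filterMap fun q =>
      if isDup B p.1 q.1 then some (freshVar p.1 q.1, q.2.orig) else none).flatten


/-! ### Generalized dependencies and the chase of `CQ^≠` queries with `Υ_{MΣ}` -/

/-- A disjunct of the consequent of a generalized dependency: an existentially
quantified conjunction of relational atoms, a conjunction of equalities, or a
single disequality.  (`false`, as in generalized implication constraints, is
represented by the absence of disjuncts.) -/
inductive GDisj (S : Schema) : Type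
  | exAtoms : List (Atom S) → GDisj S
  | eqs : List (Term × Term) → GDisj S
  | neq : Term → Term → GDisj S

/-- A generalized dependency: an antecedent (a conjunction of relational atoms)
and a finite disjunction of disjuncts. -/
structure GDep (S : Schema) : Type where
  ante : List (Atom S)
  disjs : List (GDisj S)

variable {S : Schema} {k : ℕ}

/-- Two terms are unequal for trivial reasons (distinct constants). -/
def diseqTaut (a b : Term) : Prop :=
  ∃ c d, a = Term.const c ∧ b = Term.const d ∧ c ≠ d

/-- A disjunct is already satisfied (is a tautology) in a `CQ^≠` query under a
trigger `h` (with `av` the variables of the antecedent). -/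
def disjSat (Q : CQNeq S k) (h : ℕ → Term) (av : Set ℕ) : GDisj S → Prop
  | .exAtoms ψ => ∃ h' : ℕ → Term, (∀ x ∈ av, h' x = h x) ∧
      ∀ A ∈ ψ, A.mapTerms (Term.subst h') ∈ Q.body
  | .eqs L => ∀ p ∈ L, p.1.subst h = p.2.subst h
  | .neq a b => diseqTaut (a.subst h) (b.subst h) ∨ Q.hasDiseq (a.subst h) (b.subst h)

/-- The result of a chase step on a `CQ^≠` query with an equality conjunct:
the query is rewritten by a substitution that realizes all the equalities,
fixes the constants, and is the identity outside the terms being equated.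
The step requires that none of the equated pairs be disequated in the query. -/
def eqsChild (Q : CQNeq S k) (h : ℕ → Term) (L : List (Term × Term)) (Q' : CQNeq S k) : Prop :=
  (∀ p ∈ L, ¬ Q.hasDiseq (p.1.subst h) (p.2.subst h)) ∧
  ∃ θ : Term → Term, (∀ c, θ (Term.const c) = Term.const c) ∧
    (∀ u, (∀ p ∈ L, u ≠ p.1.subst h ∧ u ≠ p.2.subst h) → θ u = u) ∧
    (∀ p ∈ L, θ (p.1.subst h) = θ (p.2.subst h)) ∧
    (∀ u, θ u = u ∨ ∃ p ∈ L, θ u = θ (p.1.subst h)) ∧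
    Q' = Q.mapTerms θ

/-- A chase step with an equality conjunct fails (e.g., it equates distinct
constants, or terms that are explicitly disequated in the query). -/
def eqsFails (Q : CQNeq S k) (h : ℕ → Term) (L : List (Term × Term)) : Prop :=
  ¬ ∃ Q', eqsChild Q h L Q'

/-- The result of a chase step with a disequality disjunct: the disequality is
added to the query. -/
def neqChild (Q : CQNeq S k) (h : ℕ → Term) (a b : Term) (Q' : CQNeq S k) : Prop :=
  a.subst h ≠ b.subst h ∧
  Q' = ⟨Q.head, Q.body, Q.diseqs ++ [(a.subst h, b.subst h)]⟩

/-- A chase step with a disequality disjunct fails: the two sides are the same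
variable or the same constant. -/
def neqFails (_Q : CQNeq S k) (h : ℕ → Term) (a b : Term) : Prop :=
  a.subst h = b.subst h

/-- The result of a chase step with an existential-atoms disjunct: the image of the
atoms is conjoined to the body, with fresh distinct variables for the
existential variables. -/
def exAtomsChild (Q : CQNeq S k) (h : ℕ → Term) (av : Set ℕ) (ψ : List (Atom S))
    (Q' : CQNeq S k) : Prop :=
  ∃ h' : ℕ → Term, (∀ x ∈ av, h' x = h x) ∧
    (∀ x ∈ BodyVars ψ, x ∉ av → ∃ y, h' x = Term.var y ∧ Term.var y ∉ Q.terms) ∧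
    Set.InjOn h' { x | x ∈ BodyVars ψ ∧ x ∉ av } ∧
    Q' = ⟨Q.head, Q.body ++ ψ.map (Atom.mapTerms (Term.subst h')), Q.diseqs⟩

/-- The (successful) results of applying one disjunct in a chase step. -/
def disjChild (Q : CQNeq S k) (h : ℕ → Term) (av : Set ℕ) :
    GDisj S → Set (Option (CQNeq S k))
  | .exAtoms ψ => { o | ∃ Q', o = some Q' ∧ exAtomsChild Q h av ψ Q' }
  | .eqs L => { o | ∃ Q', o = some Q' ∧ eqsChild Q h L Q' }
  | .neq a b => { o | ∃ Q', o = some Q' ∧ neqChild Q h a b Q' }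

/-- Whether applying a disjunct in a chase step fails. -/
def disjFails (Q : CQNeq S k) (h : ℕ → Term) : GDisj S → Prop
  | .exAtoms _ => False
  | .eqs L => eqsFails Q h L
  | .neq a b => neqFails Q h a b

/-- The set of results of one chase step with a generalized dependency `g` on a
`CQ^≠` query `Q` with trigger `h`: the successful results of the disjuncts, or
the trivial query `ε` (= `none`) if all disjuncts fail. -/
def gdepResults (g : GDep S) (Q : CQNeq S k) (h : ℕ → Term) : Set (Option (CQNeq S k)) :=
  { o | (∃ d ∈ g.disjs, o ∈ disjChild Q h (BodyVars g.ante) d)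
      ∨ (o = none ∧ ∀ d ∈ g.disjs, disjFails Q h d) }

/-- The possible chase steps with a generalized dependency on a `CQ^≠` query:
a trigger from the antecedent into the body such that no disjunct is already
satisfied, together with the resulting set of children. -/
def gdepSteps (g : GDep S) (Q : CQNeq S k) : Set (Set (Option (CQNeq S k))) :=
  { C | ∃ h : ℕ → Term, homTo h g.ante Q ∧
      (∀ d ∈ g.disjs, ¬ disjSat Q h (BodyVars g.ante) d) ∧ C = gdepResults g Q h }

/-- The `≠`-transformation `σ_(≠)` of a tgd `σ : φ → ∃z̄ ψ`:
`ℛ(φ⁽ⁿ⁾) → (∃z̄ ψ) ∨ ¬ℰ(φ⁽ⁿ⁾)`. -/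
def TGD.neqT (σ : TGD S) : GDep S :=
  ⟨normBody σ.body,
   GDisj.exAtoms (σ.head.map Atom.orig) :: (normEqs σ.body).map fun p => GDisj.neq p.1 p.2⟩

/-- The `≠`-transformation `σ_(≠)` of an egd `σ : φ → x₁ = x₂`:
`ℛ(φ⁽ⁿ⁾) → (x₁ = x₂) ∨ ¬ℰ(φ⁽ⁿ⁾)`. -/
def EGD.neqT (σ : EGD S) : GDep S :=
  ⟨normBody σ.body,
   GDisj.eqs [((Term.var σ.lhs).orig, (Term.var σ.rhs).orig)] ::
     (normEqs σ.body).map fun p => GDisj.neq p.1 p.2⟩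

/-- The `MV`-induced generalized implication constraint `ι_V` of a view `V` with
`MV[V] = ∅`:  `ℛ(φ⁽ⁿ⁾) → false ∨ ¬ℰ(φ⁽ⁿ⁾)`. -/
def MVSetting.gicDep (M : MVSetting) (v : M.views.idx) : GDep M.S :=
  ⟨normBody (M.views.defn v).body,
   (normEqs (M.views.defn v).body).map fun p => GDisj.neq p.1 p.2⟩

/-- The equalities `x̄ = t̄` between the (normalized) head vector of a view and a
tuple of `MV`. -/
def MVSetting.gnegdPairs (M : MVSetting) (v : M.views.idx)
    (t : Fin (M.views.arity v) → Val) : List (Term × Term) :=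
  List.ofFn fun i => (((M.views.defn v).head i).orig, (t i).toTerm)

/-- The possible chase steps with the `MV`-induced generalized negd `τ_V` of a view
`V` of positive arity with `MV[V] ≠ ∅`:
`ℛ(φ⁽ⁿ⁾) → ⋁_{i} (x̄ = t̄ᵢ) ∨ ¬ℰ(φ⁽ⁿ⁾)`, one equality disjunct per tuple of
`MV[V]`. -/
def MVSetting.gnegdSteps (M : MVSetting) {k : ℕ} (v : M.views.idx) (Q : CQNeq M.S k) :
    Set (Set (Option (CQNeq M.S k))) :=
  { C | (M.mv.rels v).Nonempty ∧ 1 ≤ M.views.arity v ∧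
      ∃ h : ℕ → Term, homTo h (normBody (M.views.defn v).body) Q ∧
        (∀ t ∈ M.mv.rels v,
          ¬ disjSat Q h (BodyVars (normBody (M.views.defn v).body)) (GDisj.eqs (M.gnegdPairs v t))) ∧
        (∀ p ∈ normEqs (M.views.defn v).body,
          ¬ disjSat Q h (BodyVars (normBody (M.views.defn v).body)) (GDisj.neq p.1 p.2)) ∧
        C = { o | (∃ t ∈ M.mv.rels v,
                    o ∈ disjChild Q h (BodyVars (normBody (M.views.defn v).body))
                        (GDisj.eqs (M.gnegdPairs v t)))
               ∨ (∃ p ∈ normEqs (M.views.defn v).body,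
                    o ∈ disjChild Q h (BodyVars (normBody (M.views.defn v).body))
                        (GDisj.neq p.1 p.2))
               ∨ (o = none ∧
                    (∀ t ∈ M.mv.rels v, disjFails Q h (GDisj.eqs (M.gnegdPairs v t))) ∧
                    (∀ p ∈ normEqs (M.views.defn v).body, disjFails Q h (GDisj.neq p.1 p.2))) } }

/-- The step system of the chase of `CQ^≠` queries with the dependencies
`Υ_{MΣ} = Φ_(MV) ∪ Σ_(≠)`: steps with the `≠`-transformations of the tgds and
egds of `Σ`, with the `MV`-induced generalized implication constraints, and with
the `MV`-induced generalized negds.  (`none` is the node `ε`.) -/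
def MVSetting.qSteps (M : MVSetting) (k : ℕ) :
    Option (CQNeq M.S k) → Set (Set (Option (CQNeq M.S k)))
  | none => ∅
  | some Q =>
    { C | (∃ σ : TGD M.S, Dep.tgd σ ∈ M.deps ∧ C ∈ gdepSteps σ.neqT Q)
        ∨ (∃ σ : EGD M.S, Dep.egd σ ∈ M.deps ∧ C ∈ gdepSteps σ.neqT Q)
        ∨ (∃ v, M.mv.rels v = ∅ ∧ C ∈ gdepSteps (M.gicDep v) Q)
        ∨ (∃ v, C ∈ M.gnegdSteps v Q) }

/-- One edge of the chase of `CQ^≠` queries with `Υ_{MΣ}`. -/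
def MVSetting.qStep (M : MVSetting) (k : ℕ) (a b : Option (CQNeq M.S k)) : Prop :=
  ∃ C ∈ M.qSteps k a, b ∈ C

/-- The `MΣ`-expansion `Q'` of a CQ query `Q`: the `CQ^≠` query (without
disequalities) obtained by conjoining the body of `Q` with `C^exp_MV`, the
expansion of `MV` over the base schema, in which all the variables of
`C^exp_MV` have been renamed apart from those of `Q` (the head variables of
each view definition being bound to the constants of the corresponding fact
of `MV`, and its nonhead variables being mapped to globally distinct fresh
variables). -/
def MVSetting.IsMSExpansion (M : MVSetting) {k : ℕ} (Q : CQ M.S k) (Q' : CQNeq M.S k) : Prop :=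
  Q'.head = Q.head ∧ Q'.diseqs = [] ∧
  ∃ ν : (v : M.views.idx) → (Fin (M.views.arity v) → Val) → ℕ → Term,
    (∀ v, ∀ t ∈ M.mv.rels v, ∀ i,
      ((M.views.defn v).head i).subst (ν v t) = (t i).toTerm) ∧
    (∀ v, ∀ t ∈ M.mv.rels v, ∀ x ∈ BodyVars (M.views.defn v).body,
      (¬ ∃ i, (M.views.defn v).head i = Term.var x) →
      ∃ y, ν v t x = Term.var y ∧
        (∀ i, Q.head i ≠ Term.var y) ∧ ¬ ∃ A ∈ Q.body, ∃ j, A.args j = Term.var y) ∧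
    (∀ v v' t t' x x', t ∈ M.mv.rels v → t' ∈ M.mv.rels v' →
      x ∈ BodyVars (M.views.defn v).body →
      (¬ ∃ i, (M.views.defn v).head i = Term.var x) →
      x' ∈ BodyVars (M.views.defn v').body →
      (¬ ∃ i, (M.views.defn v').head i = Term.var x') →
      ν v t x = ν v' t' x' → v = v' ∧ HEq t t' ∧ x = x') ∧
    { A | A ∈ Q'.body } =
      { A | A ∈ Q.body } ∪
      { A | ∃ v, ∃ t ∈ M.mv.rels v, ∃ A0 ∈ (M.views.defn v).body,
              A = A0.mapTerms (Term.subst (ν v t)) }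

/-- `R` is a chase result `(Q)^{MΣ}` of the `CQ^≠` query `Q0` with `Υ_{MΣ}`:
the `UCQ^≠` query whose components are the non-`ε` leaves of a (finite) chase
tree for `MΣ` and `Q0`. -/
def MVSetting.IsChaseResult (M : MVSetting) {k : ℕ} (Q0 : CQNeq M.S k)
    (R : List (CQNeq M.S k)) : Prop :=
  ∃ T : RTree (Option (CQNeq M.S k)), T.label = some Q0 ∧
    RTree.Valid (M.qSteps k) T ∧ R = T.leaves.filterMap id


/-! ### Complexity: polynomial time, `Π^p_2`, and concrete problem encodings -/

/-- A polynomial-time computable function on natural numbers (under the standard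
binary encoding), via Mathlib's Turing-machine model. -/
def PTimeFun (f : ℕ → ℕ) : Prop :=
  Nonempty (Turing.TM2ComputableInPolyTime
    Computability.encodingNatBool.encode Computability.encodingNatBool.encode f)

/-- Pairing of three inputs into one. -/
def tripleCode (x y z : ℕ) : ℕ := Nat.pair x (Nat.pair y z)

/-- Membership in `Π^p_2` (the second level of the polynomial hierarchy) of a
language of (binary-encoded) natural numbers: a `∀∃` certificate characterization
with polynomial certificate bounds and a polynomial-time verifier. -/
def InPi2P (L : Set ℕ) : Prop :=
  ∃ (c : ℕ) (f : ℕ → ℕ), PTimeFun f ∧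
    ∀ x, x ∈ L ↔ ∀ y, Nat.size y ≤ (Nat.size x + 1) ^ c →
      ∃ z, Nat.size z ≤ (Nat.size x + 1) ^ c ∧ f (tripleCode x y z) = 1

/-- Polynomial-time many-one reducibility. -/
def PolyReduces (A B : Set ℕ) : Prop :=
  ∃ f : ℕ → ℕ, PTimeFun f ∧ ∀ x, x ∈ A ↔ f x ∈ B

/-- `Π^p_2`-hardness of a language. -/
def Pi2PHard (L : Set ℕ) : Prop := ∀ A, InPi2P A → PolyReduces A L

instance : Encodable Term :=
  Encodable.ofEquiv (ℕ ⊕ ℕ)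
    { toFun := fun t => match t with | .var x => .inl x | .const c => .inr c
      invFun := fun s => match s with | .inl x => .var x | .inr c => .const c
      left_inv := fun t => by cases t <;> rfl
      right_inv := fun s => by cases s <;> rfl }

/-- A concrete schema: relation symbols `0, …, m-1` with given arities. -/
structure CSchema : Type where
  m : ℕ
  ar : Fin m → ℕ

/-- The schema denoted by a concrete schema. -/
abbrev CSchema.toSchema (C : CSchema) : Schema := ⟨Fin C.m, C.ar⟩

/-- A concrete finite set of views over a concrete schema:
view names `0, …, l-1` with arities, defined by safe CQ queries. -/
structure CViews (C : CSchema) : Type where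
  l : ℕ
  var : Fin l → ℕ
  defn : ∀ v : Fin l, CQ C.toSchema (var v)
  safe : ∀ v, (defn v).Safe

/-- The set of views denoted by a concrete set of views. -/
def CViews.toViews {C : CSchema} (W : CViews C) : Views C.toSchema :=
  ⟨Fin W.l, inferInstance, W.var, W.defn, W.safe⟩

/-- The concrete syntax of an atom over a concrete schema. -/
def Atom.syn {C : CSchema} (A : Atom C.toSchema) : ℕ × List Term :=
  (A.rel.val, List.ofFn A.args)

/-- The concrete syntax of a CQ query over a concrete schema. -/
def CQ.syn {C : CSchema} {k : ℕ} (Q : CQ C.toSchema k) : List Term × List (ℕ × List Term) :=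
  (List.ofFn Q.head, Q.body.map Atom.syn)

/-- The ground instance of the view schema denoted by a concrete list of view facts
(each a view index together with a list of constants). -/
def mvDen {C : CSchema} (W : CViews C) (L : List (ℕ × List ℕ)) : Inst W.toViews.schema :=
  ⟨fun v => { t | ∃ e ∈ L, e.1 = v.val ∧ ∃ hl : e.2.length = W.var v,
      t = fun i => Val.const (e.2.get (Fin.cast hl.symm i)) }⟩

/-- The certain-query-answer problem, as a language: the fixed parts are a schema,
a set of dependencies, and the view definitions; the input is (an encoding of) a
CQ query `Q`, a ground tuple `t̄` of length equal to the arity of `Q`, and a set of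
view answers `MV`, and the yes-instances are those in which `t̄` is a certain
answer to `Q` w.r.t. the setting `(P, Σ, V, MV)`. -/
def certLang (C : CSchema) (W : CViews C) (ds : Set (Dep C.toSchema))
    (h1 : ds.Finite) (h2 : ∀ d ∈ ds, d.ConstantFree) : Set ℕ :=
  { n | ∃ (k : ℕ) (Q : CQ C.toSchema k) (t : Fin k → ℕ) (L : List (ℕ × List ℕ)),
      n = Encodable.encode (Q.syn, List.ofFn t, L) ∧ Q.Safe ∧
      ∃ (hg : (mvDen W L).Ground) (hf : (mvDen W L).facts.Finite),
        constTuple t ∈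
          (MVSetting.mk (Frame.mk C.toSchema ds h1 h2 W.toViews) (mvDen W L) hg hf).certain
            Q.answer }

/-- The `MΣ`-conditional-containment problem, as a language: the fixed parts are a
schema, a set of dependencies, and the view definitions; the input is (an encoding
of) two CQ queries `Q₁, Q₂` of the same arity and a set of view answers `MV`, and
the yes-instances are those in which `Q₁ ⊑_{MΣ} Q₂` for the setting
`(P, Σ, V, MV)`. -/
def contLang (C : CSchema) (W : CViews C) (ds : Set (Dep C.toSchema))
    (h1 : ds.Finite) (h2 : ∀ d ∈ ds, d.ConstantFree) : Set ℕ :=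
  { n | ∃ (k : ℕ) (Q1 Q2 : CQ C.toSchema k) (L : List (ℕ × List ℕ)),
      n = Encodable.encode (Q1.syn, Q2.syn, L) ∧ Q1.Safe ∧ Q2.Safe ∧
      ∃ (hg : (mvDen W L).Ground) (hf : (mvDen W L).facts.Finite),
        (MVSetting.mk (Frame.mk C.toSchema ds h1 h2 W.toViews) (mvDen W L) hg hf).CondContained
          Q1.answer Q2.answer }


/-! ### Auxiliary development for the proof -/

section Aux

open Classical

variable {S : Schema}

abbrev Fact (S : Schema) : Type := (r : S.rel) × (Fin (S.arity r) → Val)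

lemma facts_ofFacts (F : Set (Fact S)) : (Inst.ofFacts F).facts = F := rfl

lemma map_facts (ρ : Val → Val) (I : Inst S) :
    (I.map ρ).facts = (fun p : Fact S => (⟨p.1, fun i => ρ (p.2 i)⟩ : Fact S)) '' I.facts := rfl

lemma term_eval_comp {ρ : Val → Val} (hc : ∀ c, ρ (Val.const c) = Val.const c)
    (ν : ℕ → Val) (u : Term) : Term.eval (fun x => ρ (ν x)) u = ρ (Term.eval ν u) := by
  cases u with
  | var x => rfl
  | const c => simp [Term.eval, hc]

lemma bodyHolds_congr {B : List (Atom S)} {I : Inst S} {ν ν' : ℕ → Val}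
    (h : ∀ x ∈ BodyVars B, ν x = ν' x) (hb : BodyHolds ν B I) : BodyHolds ν' B I := by
  intro A hA
  have he : (fun i => Term.eval ν' (A.args i)) = fun i => Term.eval ν (A.args i) := by
    funext i
    cases hu : A.args i with
    | var x => simpa [Term.eval] using (h x ⟨A, hA, i, hu⟩).symm
    | const c => rfl
  rw [he]; exact hb A hA

lemma bodyHolds_mono {B : List (Atom S)} {I I' : Inst S} {ν : ℕ → Val}
    (hsub : I.facts ⊆ I'.facts) (hb : BodyHolds ν B I) : BodyHolds ν B I' := by
  intro A hA
  have h1 : (⟨A.rel, fun i => Term.eval ν (A.args i)⟩ : Fact S) ∈ I.facts := hb A hA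
  exact hsub h1

lemma bodyHolds_map {B : List (Atom S)} {I : Inst S} {ν : ℕ → Val} {ρ : Val → Val}
    (hc : ∀ c, ρ (Val.const c) = Val.const c) (hb : BodyHolds ν B I) :
    BodyHolds (fun x => ρ (ν x)) B (I.map ρ) := by
  intro A hA
  have hmem : (⟨A.rel, fun i => ρ (Term.eval ν (A.args i))⟩ : Fact S) ∈ (I.map ρ).facts :=
    ⟨⟨A.rel, fun i => Term.eval ν (A.args i)⟩, hb A hA, rfl⟩
  have heq : (fun i => Term.eval (fun x => ρ (ν x)) (A.args i)) =
      fun i => ρ (Term.eval ν (A.args i)) := by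
    funext i; exact term_eval_comp hc ν (A.args i)
  show (fun i => Term.eval (fun x => ρ (ν x)) (A.args i)) ∈ (I.map ρ).rels A.rel
  rw [heq]; exact hmem

lemma mem_adom_of_fact {I : Inst S} {p : Fact S} (hp : p ∈ I.facts) (i : Fin (S.arity p.1)) :
    p.2 i ∈ I.adom := ⟨p, hp, i, rfl⟩

lemma adom_finite {I : Inst S} (h : I.facts.Finite) : I.adom.Finite := by
  have hsub : I.adom ⊆ ⋃ p ∈ I.facts, Set.range p.2 := by
    rintro a ⟨p, hp, i, hi⟩; exact Set.mem_biUnion hp ⟨i, hi⟩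
  exact Set.Finite.subset (Set.Finite.biUnion h fun p _ => Set.finite_range _) hsub

lemma factSet_finite (B : List (Atom S)) (ν : ℕ → Val) : (factSet B ν).Finite := by
  have he : factSet B ν =
      (fun A : Atom S => (⟨A.rel, fun i => Term.eval ν (A.args i)⟩ : Fact S)) '' {A | A ∈ B} := by
    ext p; constructor
    · rintro ⟨A, hA, rfl⟩; exact ⟨A, hA, rfl⟩
    · rintro ⟨A, hA, rfl⟩; exact ⟨A, hA, rfl⟩
  rw [he]; exact (B.finite_toSet).image _

lemma ground_map_fix {k : ℕ} {t : Fin k → Val} (ht : ∀ i, (t i).IsConst) {ρ : Val → Val}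
    (hc : ∀ c, ρ (Val.const c) = Val.const c) : (fun i => ρ (t i)) = t := by
  funext i; obtain ⟨c, hcc⟩ := ht i; rw [hcc, hc]

lemma answer_map {k : ℕ} {Q : CQ S k} {I : Inst S} {ρ : Val → Val}
    (hc : ∀ c, ρ (Val.const c) = Val.const c)
    {t} (ht : t ∈ Q.answer I) : (fun i => ρ (t i)) ∈ Q.answer (I.map ρ) := by
  obtain ⟨ν, hb, rfl⟩ := ht
  exact ⟨fun x => ρ (ν x), bodyHolds_map hc hb, by funext i; exact (term_eval_comp hc ν _).symm⟩

lemma answer_mono {k : ℕ} {Q : CQ S k} {I I' : Inst S} (h : I.facts ⊆ I'.facts) :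
    Q.answer I ⊆ Q.answer I' := by
  rintro t ⟨ν, hb, rfl⟩; exact ⟨ν, bodyHolds_mono h hb, rfl⟩

lemma exists_fresh_nulls (A : Set Val) (hA : A.Finite) : ∃ N : ℕ, ∀ n, N ≤ n → Val.null n ∉ A := by
  have h1 : (Val.null ⁻¹' A).Finite :=
    hA.preimage (fun a _ b _ h => by injection h)
  obtain ⟨N, hN⟩ := h1.bddAbove
  exact ⟨N + 1, fun n hn hna => by have := hN hna; omega⟩

lemma mv_rels_finite (M : MVSetting) (v : M.views.idx) : (M.mv.rels v).Finite := by
  have h := M.mvFinite.preimage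
    (f := fun t : Fin (M.views.arity v) → Val => (⟨v, t⟩ : Fact M.views.schema))
    (fun a _ b _ h => eq_of_heq (Sigma.mk.inj_iff.mp h).2)
  exact h

lemma map_rels_elim {J : Inst S} {ρ : Val → Val} {r : S.rel} {t : Fin (S.arity r) → Val}
    (h : t ∈ (J.map ρ).rels r) :
    ∃ u : Fin (S.arity r) → Val, u ∈ J.rels r ∧ ∀ i, ρ (u i) = t i := by
  obtain ⟨⟨r', u⟩, hu, heq⟩ := h
  obtain ⟨rfl, h2⟩ := Sigma.mk.inj_iff.mp heq
  exact ⟨u, hu, fun i => congrFun (eq_of_heq h2) i⟩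

end Aux
section Backward

open Classical

variable {S : Schema}

/-- A violated tgd trigger on a finite instance always yields a chase step. -/
lemma tgd_step_exists {σ : TGD S} {J : Inst S} (hfin : J.facts.Finite) {h : ℕ → Val}
    (hb : BodyHolds h σ.body J)
    (hns : ¬∃ g : ℕ → Val, (∀ x ∈ BodyVars σ.body, g x = h x) ∧ BodyHolds g σ.head J) :
    ∃ J', tgdStep σ J J' := by
  obtain ⟨N, hN⟩ := exists_fresh_nulls J.adom (adom_finite hfin)
  refine ⟨_, h, hb, hns, fun x =>
    if x ∈ BodyVars σ.head ∧ x ∉ BodyVars σ.body then Val.null (N + x) else h x,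
    ?_, ?_, ?_, rfl⟩
  · intro x hx
    have : ¬(x ∈ BodyVars σ.head ∧ x ∉ BodyVars σ.body) := fun hc => hc.2 hx
    simp [this]
  · intro x hx hnx
    have hc : x ∈ BodyVars σ.head ∧ x ∉ BodyVars σ.body := ⟨hx, hnx⟩
    simp only [if_pos hc]
    exact ⟨⟨N + x, rfl⟩, hN (N + x) (Nat.le_add_right _ _)⟩
  · intro x hx y hy hxy
    simp only [Set.mem_setOf_eq] at hx hy
    dsimp only at hxy
    rw [if_pos hx, if_pos hy] at hxy
    injection hxy with h'
    omega

/-- A violated egd trigger yields a successful or failing chase step. -/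
lemma egd_violation_step {σ : EGD S} {J : Inst S} {h : ℕ → Val}
    (hb : BodyHolds h σ.body J) (hne : h σ.lhs ≠ h σ.rhs) :
    egdStepFail σ J ∨ ∃ J', egdStepOk σ J J' := by
  cases hl : h σ.lhs with
  | null n => exact Or.inr ⟨_, h, hb, hne, Or.inl ⟨⟨n, hl⟩, rfl⟩⟩
  | const c =>
    cases hr : h σ.rhs with
    | null m => exact Or.inr ⟨_, h, hb, hne, Or.inr ⟨⟨m, hr⟩, rfl⟩⟩
    | const d => exact Or.inl ⟨h, hb, hne, ⟨c, hl⟩, ⟨d, hr⟩⟩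

/-- Characterization of the leaves of the MV-enhanced chase. -/
lemma leaf_characterization {M : MVSetting} {J : Inst M.S} (hfin : J.facts.Finite)
    (hleaf : M.mvChaseSteps (some J) = ∅) :
    J.satisfiesAll M.deps ∧
    (∀ v, M.mv.rels v = ∅ → ∀ h, ¬ BodyHolds h (M.views.defn v).body J) ∧
    (∀ v (h : ℕ → Val), BodyHolds h (M.views.defn v).body J → 1 ≤ M.views.arity v →
      (M.mv.rels v).Nonempty →
      ∃ t ∈ M.mv.rels v, ∀ i, headVals (M.views.defn v) h i = t i) := by
  have hno : ∀ C, C ∉ M.mvChaseSteps (some J) := by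
    intro C hC; rw [hleaf] at hC; exact hC
  refine ⟨?_, ?_, ?_⟩
  · intro d hd
    cases d with
    | tgd σ =>
      intro ν hb
      by_contra hns
      obtain ⟨J', hstep⟩ := tgd_step_exists hfin hb hns
      exact hno {some J'} (Or.inl ⟨σ, hd, J', hstep, rfl⟩)
    | egd σ =>
      intro ν hb
      by_contra hne
      rcases egd_violation_step hb hne with hf | ⟨J', hs⟩
      · exact hno {none} (Or.inr (Or.inr (Or.inl ⟨σ, hd, hf, rfl⟩)))
      · exact hno {some J'} (Or.inr (Or.inl ⟨σ, hd, J', hs, rfl⟩))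
  · intro v hv h hb
    exact hno {none} (Or.inr (Or.inr (Or.inr (Or.inl ⟨v, hv, ⟨h, hb⟩, rfl⟩))))
  · intro v h hb har hne
    by_contra hno2
    push_neg at hno2
    have hvio : ∀ t ∈ M.mv.rels v, ∃ i, headVals (M.views.defn v) h i ≠ t i := by
      intro t ht
      obtain ⟨i, hi⟩ := hno2 t ht
      exact ⟨i, hi⟩
    exact hno (M.gedResults v J h)
      (Or.inr (Or.inr (Or.inr (Or.inr ⟨v, hne, har, h, hb, hvio, rfl⟩))))

/-- Structure of a single successful chase step with a set of dependencies. -/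
lemma depStep_structure {D : Set (Dep S)} {J J' : Inst S} (h : depStepTo D J J') :
    (∃ F : Set (Fact S), F.Finite ∧ J'.facts = J.facts ∪ F) ∨
    (∃ ρ : Val → Val, (∀ c, ρ (Val.const c) = Val.const c) ∧ J' = J.map ρ) := by
  rcases h with ⟨σ, _, h, hb, hns, h', hagree, hfresh, hinj, rfl⟩ | ⟨σ, _, h, hb, hne, hcase⟩
  · exact Or.inl ⟨factSet σ.head h', factSet_finite _ _, rfl⟩
  · rcases hcase with ⟨⟨n, hn⟩, rfl⟩ | ⟨⟨n, hn⟩, rfl⟩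
    · refine Or.inr ⟨_, ?_, rfl⟩
      intro c
      rw [if_neg]; rw [hn]; exact fun hc => Val.noConfusion hc
    · refine Or.inr ⟨_, ?_, rfl⟩
      intro c
      rw [if_neg]; rw [hn]; exact fun hc => Val.noConfusion hc

/-- Structure of a single mv-enhanced chase step between proper instances. -/
lemma mvStep_structure {M : MVSetting} {J J' : Inst M.S} (h : M.mvStep (some J) (some J')) :
    (∃ F : Set (Fact M.S), F.Finite ∧ J'.facts = J.facts ∪ F) ∨
    (∃ ρ : Val → Val, (∀ c, ρ (Val.const c) = Val.const c) ∧ J' = J.map ρ) := by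
  obtain ⟨C, hC, hmem⟩ := h
  rcases hC with ⟨σ, hσ, J'', hstep, rfl⟩ | ⟨σ, hσ, J'', hstep, rfl⟩ | ⟨σ, hσ, hf, rfl⟩ |
    ⟨v, hv, hex, rfl⟩ | ⟨v, hv, har, h', hb, hvio, rfl⟩
  · have : J' = J'' := by simpa using hmem
    subst this
    exact depStep_structure (Or.inl ⟨σ, hσ, hstep⟩)
  · have : J' = J'' := by simpa using hmem
    subst this
    exact depStep_structure (Or.inr ⟨σ, hσ, hstep⟩)
  · simp at hmem
  · simp at hmem
  · rcases hmem with ⟨t, ht, J'', heq, ρ, hc, hfix, hvals, hmap⟩ | ⟨hnone, _⟩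
    · injection heq with h2
      subst h2
      exact Or.inr ⟨ρ, hc, hmap⟩
    · exact absurd hnone (by simp)

/-- The invariant we track along the chase, in the backward direction. -/
def GoodInv (M : MVSetting) (J : Inst M.S) : Prop :=
  J.facts.Finite ∧ ∀ v, M.mv.rels v ⊆ (M.views.defn v).answer J

lemma goodInv_step {M : MVSetting} {J J' : Inst M.S}
    (hstruct : (∃ F : Set (Fact M.S), F.Finite ∧ J'.facts = J.facts ∪ F) ∨
      (∃ ρ : Val → Val, (∀ c, ρ (Val.const c) = Val.const c) ∧ J' = J.map ρ))
    (hg : GoodInv M J) : GoodInv M J' := by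
  obtain ⟨hfin, hans⟩ := hg
  rcases hstruct with ⟨F, hF, hfacts⟩ | ⟨ρ, hc, rfl⟩
  · constructor
    · rw [hfacts]; exact hfin.union hF
    · intro v t ht
      exact answer_mono (by rw [hfacts]; exact Set.subset_union_left) (hans v ht)
  · constructor
    · rw [map_facts]; exact hfin.image _
    · intro v t ht
      obtain ⟨ν, hb, hteq⟩ := hans v ht
      refine ⟨fun x => ρ (ν x), bodyHolds_map hc hb, ?_⟩
      funext i
      rw [term_eval_comp hc, ← congrFun hteq i]
      obtain ⟨c, hcc⟩ := M.mvGround v t ht i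
      rw [hcc, hc]

lemma goodInv_depChase {M : MVSetting} {J J' : Inst M.S}
    (hr : Relation.ReflTransGen (depStepTo M.deps) J J') (hg : GoodInv M J) : GoodInv M J' := by
  induction hr with
  | refl => exact hg
  | tail _ hstep ih => exact goodInv_step (depStep_structure hstep) ih

lemma goodInv_mvReach {M : MVSetting} {J K : Inst M.S}
    (hr : M.mvReach (some J) (some K)) (hg : GoodInv M J) : GoodInv M K := by
  have key : ∀ o, Relation.ReflTransGen M.mvStep (some J) o → ∀ L, o = some L → GoodInv M L := by
    intro o ho
    induction ho with
    | refl => rintro L hL; cases hL; exact hg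
    | @tail b c hr' hstep ih =>
      rintro L rfl
      cases b with
      | none =>
        obtain ⟨C, hC, _⟩ := hstep
        exact absurd hC (by simp [MVSetting.mvChaseSteps])
      | some Jb => exact goodInv_step (mvStep_structure hstep) (ih Jb rfl)
  exact key _ hr K rfl

/-- A presolution satisfies the invariant. -/
lemma goodInv_presolution {M : MVSetting} {J0 : Inst M.S} (hp : M.IsPreSolution J0) :
    GoodInv M J0 := by
  obtain ⟨ν, hhead, hex, hinj, hfacts⟩ := hp
  have hfin : J0.facts.Finite := by
    rw [hfacts]
    haveI : Finite M.views.schema.rel := M.views.finite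
    exact Set.finite_iUnion fun v => Set.Finite.biUnion (mv_rels_finite M v)
      (fun t _ => factSet_finite _ _)
  refine ⟨hfin, ?_⟩
  intro v t ht
  refine ⟨ν v t, ?_, ?_⟩
  · intro A hA
    have hm : (⟨A.rel, fun i => Term.eval (ν v t) (A.args i)⟩ : Fact M.S) ∈ J0.facts := by
      rw [hfacts]
      exact Set.mem_iUnion.mpr ⟨v, Set.mem_biUnion ht ⟨A, hA, rfl⟩⟩
    exact hm
  · funext i; exact (hhead v t ht i).symm

end Backward
section Ground

open Classical

variable {S : Schema}

lemma cq_consts_finite {k : ℕ} (Q : CQ S k) : Q.consts.Finite := by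
  have hsub : Q.consts ⊆ (⋃ i, {c | Q.head i = Term.const c}) ∪
      ⋃ A ∈ {A | A ∈ Q.body}, ⋃ j, {c | A.args j = Term.const c} := by
    rintro c (⟨i, hi⟩ | ⟨A, hA, j, hj⟩)
    · exact Set.mem_union_left _ (Set.mem_iUnion.mpr ⟨i, hi⟩)
    · exact Set.mem_union_right _ (Set.mem_biUnion hA (Set.mem_iUnion.mpr ⟨j, hj⟩))
  refine Set.Finite.subset (Set.Finite.union ?_ ?_) hsub
  · exact Set.finite_iUnion fun i =>
      Set.Subsingleton.finite fun a ha b hb => by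
        have := ha.symm.trans hb; injection this
  · exact Set.Finite.biUnion (Q.body.finite_toSet) fun A _ =>
      Set.finite_iUnion fun j =>
        Set.Subsingleton.finite fun a ha b hb => by
          have := ha.symm.trans hb; injection this

/-- Pulling a valuation back through an injective grounding map. -/
lemma valuation_pullback {B : List (Atom S)} {J : Inst S} {ρ : Val → Val}
    (hc : ∀ c, ρ (Val.const c) = Val.const c)
    (hinj : Set.InjOn ρ J.adom)
    (hsafe : ∀ a ∈ J.adom, ∀ c, ρ a = Val.const c →
      (∃ A ∈ B, ∃ j, A.args j = Term.const c) → a = Val.const c)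
    {ν : ℕ → Val} (hb : BodyHolds ν B (J.map ρ)) :
    ∃ ν' : ℕ → Val, BodyHolds ν' B J ∧ ∀ x ∈ BodyVars B, ρ (ν' x) = ν x ∧ ν' x ∈ J.adom := by
  have hwit : ∀ x ∈ BodyVars B, ∃ a, a ∈ J.adom ∧ ρ a = ν x := by
    intro x hx
    obtain ⟨A, hA, j, hj⟩ := hx
    obtain ⟨u, hu, hru⟩ := map_rels_elim (hb A hA)
    refine ⟨u j, mem_adom_of_fact (p := ⟨A.rel, u⟩) hu j, ?_⟩
    calc ρ (u j) = Term.eval ν (A.args j) := hru j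
    _ = ν x := by rw [hj]; rfl
  set ν' : ℕ → Val := fun x => if hx : x ∈ BodyVars B then choose (hwit x hx) else ν x with hν'
  have hν'p : ∀ x (hx : x ∈ BodyVars B), ν' x ∈ J.adom ∧ ρ (ν' x) = ν x := by
    intro x hx
    have hspec := choose_spec (hwit x hx)
    simp only [hν', dif_pos hx]
    exact hspec
  refine ⟨ν', ?_, fun x hx => ⟨(hν'p x hx).2, (hν'p x hx).1⟩⟩
  intro A hA
  obtain ⟨u, hu, hru⟩ := map_rels_elim (hb A hA)
  have heq : (fun i => Term.eval ν' (A.args i)) = u := by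
    funext i
    cases hargs : A.args i with
    | var x =>
      have hx : x ∈ BodyVars B := ⟨A, hA, i, hargs⟩
      have h1 : ρ (ν' x) = ν x := (hν'p x hx).2
      have h2 : ρ (u i) = ν x := by
        have h3 := hru i; rw [hargs] at h3; exact h3
      show ν' x = u i
      exact hinj (hν'p x hx).1 (mem_adom_of_fact (p := ⟨A.rel, u⟩) hu i) (h1.trans h2.symm)
    | const c =>
      have h2 : ρ (u i) = Val.const c := by
        have h3 := hru i; rw [hargs] at h3; exact h3
      have h4 := hsafe (u i) (mem_adom_of_fact (p := ⟨A.rel, u⟩) hu i) c h2 ⟨A, hA, i, hargs⟩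
      show Val.const c = u i
      exact h4.symm
  show (fun i => Term.eval ν' (A.args i)) ∈ J.rels A.rel
  rw [heq]; exact hu

/-- Constant-free dependencies transfer through injective constant-fixing renamings. -/
lemma dep_transfer {d : Dep S} (hcf : d.ConstantFree) {J : Inst S} {ρ : Val → Val}
    (hc : ∀ c, ρ (Val.const c) = Val.const c) (hinj : Set.InjOn ρ J.adom)
    (hd : d.holds J) : d.holds (J.map ρ) := by
  have hsafe0 : ∀ (B : List (Atom S)), (∀ A ∈ B, A.ConstantFree) →
      ∀ a ∈ J.adom, ∀ c, ρ a = Val.const c →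
      (∃ A ∈ B, ∃ j, A.args j = Term.const c) → a = Val.const c := by
    rintro B hB a _ c _ ⟨A, hA, j, hj⟩
    obtain ⟨x, hx⟩ := hB A hA j
    rw [hx] at hj
    exact absurd hj (by simp)
  cases d with
  | tgd σ =>
    obtain ⟨hbody, hhead⟩ := hcf
    intro ν hb
    obtain ⟨ν', hb', hp⟩ := valuation_pullback hc hinj (hsafe0 _ hbody) hb
    obtain ⟨μ, hμa, hμh⟩ := hd ν' hb'
    refine ⟨fun x => if x ∈ BodyVars σ.body then ν x else ρ (μ x), ?_, ?_⟩
    · intro x hx; simp [hx]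
    · have hρμ : BodyHolds (fun x => ρ (μ x)) σ.head (J.map ρ) := bodyHolds_map hc hμh
      refine bodyHolds_congr ?_ hρμ
      intro x hx
      by_cases hxb : x ∈ BodyVars σ.body
      · simp only [if_pos hxb]
        rw [hμa x hxb]
        exact (hp x hxb).1
      · simp [hxb]
  | egd σ =>
    intro ν hb
    obtain ⟨ν', hb', hp⟩ := valuation_pullback hc hinj (hsafe0 _ hcf) hb
    by_cases hl : σ.lhs ∈ BodyVars σ.body
    · by_cases hr : σ.rhs ∈ BodyVars σ.body
      · have h1 := hd ν' hb'
        rw [← (hp _ hl).1, ← (hp _ hr).1, h1]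
      · by_cases hlr : σ.lhs = σ.rhs
        · rw [hlr]
        · exfalso
          have hcongr : ∀ (w : Val), BodyHolds (fun x => if x = σ.rhs then w else ν' x) σ.body J := by
            intro w
            refine bodyHolds_congr (fun x hx => ?_) hb'
            rw [if_neg]; rintro rfl; exact hr hx
          have h0 := hd _ (hcongr (Val.const 0))
          have h1 := hd _ (hcongr (Val.const 1))
          simp only [if_neg hlr, if_pos rfl] at h0 h1
          rw [h0] at h1
          exact absurd h1 (by simp)
    · by_cases hlr : σ.lhs = σ.rhs
      · rw [hlr]
      · exfalso
        have hcongr : ∀ (w : Val), BodyHolds (fun x => if x = σ.lhs then w else ν' x) σ.body J := by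
          intro w
          refine bodyHolds_congr (fun x hx => ?_) hb'
          rw [if_neg]; rintro rfl; exact hl hx
        have h0 := hd _ (hcongr (Val.const 0))
        have h1 := hd _ (hcongr (Val.const 1))
        simp only [if_pos rfl, if_neg (fun h : σ.rhs = σ.lhs => hlr h.symm)] at h0 h1
        rw [← h0] at h1
        exact absurd h1 (by simp)

def viewConstSet (M : MVSetting) : Set ℕ := {c | ∃ v, c ∈ (M.views.defn v).consts}

lemma viewConstSet_finite (M : MVSetting) : (viewConstSet M).Finite := by
  haveI := M.views.finite
  have he : viewConstSet M = ⋃ v, (M.views.defn v).consts := by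
    ext c; simp [viewConstSet]
  rw [he]
  exact Set.finite_iUnion fun v => cq_consts_finite _

/-- From a finite instance with the leaf properties, a valid base instance is
obtained by grounding the nulls with fresh constants. -/
lemma exists_ground_extension {M : MVSetting} {J : Inst M.S} (hfin : J.facts.Finite)
    (hsat : J.satisfiesAll M.deps)
    (hans : ∀ v, M.mv.rels v ⊆ (M.views.defn v).answer J)
    (hempty : ∀ v, M.mv.rels v = ∅ → ∀ h, ¬ BodyHolds h (M.views.defn v).body J)
    (hhead : ∀ v (h : ℕ → Val), BodyHolds h (M.views.defn v).body J → 1 ≤ M.views.arity v →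
      (M.mv.rels v).Nonempty →
      ∃ t ∈ M.mv.rels v, ∀ i, headVals (M.views.defn v) h i = t i) :
    M.Valid := by
  set Bad : Set ℕ := {c | Val.const c ∈ J.adom} ∪ viewConstSet M with hBad
  have hBadFin : Bad.Finite := by
    refine Set.Finite.union ?_ (viewConstSet_finite M)
    exact (adom_finite hfin).preimage (fun a _ b _ h => by injection h)
  obtain ⟨N, hN⟩ := hBadFin.bddAbove
  set ρ : Val → Val := fun a => match a with
    | Val.const c => Val.const c
    | Val.null n => Val.const (N + 1 + n) with hρ
  have hc : ∀ c, ρ (Val.const c) = Val.const c := fun c => rfl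
  have hfreshBad : ∀ n, N + 1 + n ∉ Bad := fun n hn => by have := hN hn; omega
  have hinj : Set.InjOn ρ J.adom := by
    rintro a ha b hb hab
    cases a with
    | const c =>
      cases b with
      | const d => exact hab
      | null m =>
        exfalso
        have hcd : c = N + 1 + m := by injection hab
        exact hfreshBad m (by rw [← hcd]; exact Set.mem_union_left _ ha)
    | null n =>
      cases b with
      | const d =>
        exfalso
        have hcd : N + 1 + n = d := by injection hab
        exact hfreshBad n (by rw [hcd]; exact Set.mem_union_left _ hb)
      | null m =>
        have : N + 1 + n = N + 1 + m := by injection hab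
        have : n = m := by omega
        rw [this]
  refine ⟨J.map ρ, ?_, ?_, ?_⟩
  · intro r t ht i
    obtain ⟨u, hu, hru⟩ := map_rels_elim ht
    rw [← hru i]
    cases u i with
    | const c => exact ⟨c, rfl⟩
    | null n => exact ⟨N + 1 + n, rfl⟩
  · exact fun d hd => dep_transfer (M.depsConstantFree d hd) hc hinj (hsat d hd)
  · intro v
    apply Set.Subset.antisymm
    · rintro u ⟨ν, hb, rfl⟩
      have hsafeV : ∀ a ∈ J.adom, ∀ c, ρ a = Val.const c →
          (∃ A ∈ (M.views.defn v).body, ∃ j, A.args j = Term.const c) → a = Val.const c := by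
        intro a ha c hac hex
        cases a with
        | const d => exact hac
        | null n =>
          exfalso
          have hcd : N + 1 + n = c := by injection hac
          refine hfreshBad n (Set.mem_union_right _ ?_)
          rw [hcd]
          exact ⟨v, Or.inr hex⟩
      obtain ⟨ν', hb', hp⟩ := valuation_pullback hc hinj hsafeV hb
      rcases Set.eq_empty_or_nonempty (M.mv.rels v) with hvempty | hvne
      · exact absurd hb' (hempty v hvempty ν')
      · rcases Nat.eq_zero_or_pos (M.views.arity v) with h0 | h1
        · obtain ⟨t, ht⟩ := hvne
          haveI : IsEmpty (Fin (M.views.arity v)) := by rw [h0]; infer_instance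
          have he : (fun i => Term.eval ν ((M.views.defn v).head i)) = t :=
            funext fun i => (IsEmpty.false i).elim
          rw [he]; exact ht
        · obtain ⟨t, ht, hti⟩ := hhead v ν' hb' h1 hvne
          have he : (fun i => Term.eval ν ((M.views.defn v).head i)) = t := by
            funext i
            cases hh : (M.views.defn v).head i with
            | var x =>
              have hx : x ∈ BodyVars (M.views.defn v).body := by
                obtain ⟨A, hA, j, hj⟩ := (M.views.safe v).2 x ⟨i, hh⟩
                exact ⟨A, hA, j, hj⟩
              have h2 : ν' x = t i := by
                have h3 := hti i
                simp only [headVals, hh] at h3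
                exact h3
              have h3 : ρ (ν' x) = ν x := (hp x hx).1
              show ν x = t i
              rw [← h3, h2]
              obtain ⟨c, hcc⟩ := M.mvGround v t ht i
              rw [hcc, hc]
            | const c =>
              have h2 : Val.const c = t i := by
                have h3 := hti i
                simp only [headVals, hh] at h3
                exact h3
              exact h2
          rw [he]; exact ht
    · intro u hu
      obtain ⟨ν, hb, hueq⟩ := hans v hu
      refine ⟨fun x => ρ (ν x), bodyHolds_map hc hb, ?_⟩
      funext i
      rw [term_eval_comp hc, ← congrFun hueq i]
      obtain ⟨c, hcc⟩ := M.mvGround v u hu i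
      rw [hcc, hc]

/-- The backward direction of the main theorem. -/
lemma backward_direction (M : MVSetting) (h : { J | M.IsVVSolution J }.Nonempty) : M.Valid := by
  obtain ⟨J, Jde, hcan, hreach, hleaf⟩ := h
  obtain ⟨J0, hpre, hchase, hsatde⟩ := hcan
  have hg0 := goodInv_presolution hpre
  have hgde := goodInv_depChase hchase hg0
  have hgJ := goodInv_mvReach hreach hgde
  obtain ⟨hfin, hans⟩ := hgJ
  obtain ⟨hsat, hempty, hhead⟩ := leaf_characterization hfin hleaf
  exact exists_ground_extension hfin hsat hans hempty hhead

end Ground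
section Presolution

open Classical

def valCode : Val → ℕ ⊕ ℕ
  | .const c => .inl c
  | .null n => .inr n

lemma valCode_inj : Function.Injective valCode := by
  intro a b h
  cases a <;> cases b <;> simp [valCode] at h <;> simp [h]

instance : Countable Val := valCode_inj.countable

/-- Construction of a presolution together with a homomorphism into a valid base
instance. -/
lemma presolution_exists (M : MVSetting) {I : Inst M.S} (hvb : M.ValidBase I) :
    ∃ (J0 : Inst M.S) (η : Val → Val), M.IsPreSolution J0 ∧
      (∀ c, η (Val.const c) = Val.const c) ∧
      (∀ p ∈ J0.facts, (⟨p.1, fun i => η (p.2 i)⟩ : Fact M.S) ∈ I.facts) := by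
  obtain ⟨hg, hsatI, hansI⟩ := hvb
  haveI := M.views.finite
  have hwit : ∀ v (t : Fin (M.views.arity v) → Val), t ∈ M.mv.rels v →
      ∃ νI : ℕ → Val, BodyHolds νI (M.views.defn v).body I ∧
        ∀ i, Term.eval νI ((M.views.defn v).head i) = t i := by
    intro v t ht
    have h1 : t ∈ (M.views.defn v).answer I := by rw [hansI v]; exact ht
    obtain ⟨νI, hb, hte⟩ := h1
    exact ⟨νI, hb, fun i => (congrFun hte i).symm⟩
  set μ : ∀ v : M.views.idx, (Fin (M.views.arity v) → Val) → ℕ → Val := fun v t =>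
    if h : t ∈ M.mv.rels v then choose (hwit v t h) else fun _ => Val.const 0 with hμdef
  have hμb : ∀ v t (ht : t ∈ M.mv.rels v), BodyHolds (μ v t) (M.views.defn v).body I ∧
      ∀ i, Term.eval (μ v t) ((M.views.defn v).head i) = t i := by
    intro v t ht
    rw [show μ v t = choose (hwit v t ht) from dif_pos ht]
    exact choose_spec (hwit v t ht)
  -- the code type for fresh nulls
  obtain ⟨f, hf⟩ : ∃ f : ((v : M.views.idx) × ((Fin (M.views.arity v) → Val) × ℕ)) → ℕ,
      Function.Injective f := countable_iff_exists_injective _ |>.mp inferInstance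
  set ν : ∀ v : M.views.idx, (Fin (M.views.arity v) → Val) → ℕ → Val := fun v t x =>
    if h : ∃ i, (M.views.defn v).head i = Term.var x then t (choose h)
    else Val.null (f ⟨v, (t, x)⟩) with hνdef
  set J0 : Inst M.S := Inst.ofFacts
    (⋃ v, ⋃ t ∈ M.mv.rels v, factSet (M.views.defn v).body (ν v t)) with hJ0
  have hevalhead : ∀ v t, t ∈ M.mv.rels v → ∀ i,
      Term.eval (ν v t) ((M.views.defn v).head i) = t i := by
    intro v t ht i
    cases hh : (M.views.defn v).head i with
    | const c =>
      have h1 := (hμb v t ht).2 i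
      rw [hh] at h1
      exact h1
    | var x =>
      have hex : ∃ i', (M.views.defn v).head i' = Term.var x := ⟨i, hh⟩
      show ν v t x = t i
      simp only [hνdef, dif_pos hex]
      have h1 := (hμb v t ht).2 (choose hex)
      rw [choose_spec hex] at h1
      have h2 := (hμb v t ht).2 i
      rw [hh] at h2
      rw [← h1, ← h2]
  have hνnull : ∀ v t x, (¬ ∃ i, (M.views.defn v).head i = Term.var x) →
      ν v t x = Val.null (f ⟨v, (t, x)⟩) := by
    intro v t x hx
    simp only [hνdef, dif_neg hx]
  -- the homomorphism into I
  set η : Val → Val := fun a =>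
    if h : ∃ b : (v : M.views.idx) × ((Fin (M.views.arity v) → Val) × ℕ),
        a = Val.null (f b) ∧ b.2.1 ∈ M.mv.rels b.1 then
      μ (choose h).1 (choose h).2.1 (choose h).2.2
    else a with hηdef
  have hηc : ∀ c, η (Val.const c) = Val.const c := by
    intro c
    simp only [hηdef]
    rw [dif_neg]
    rintro ⟨b, hb, -⟩
    exact Val.noConfusion hb
  have hηcode : ∀ b, b.2.1 ∈ M.mv.rels b.1 → η (Val.null (f b)) = μ b.1 b.2.1 b.2.2 := by
    intro b hb
    have hex : ∃ b' : (v : M.views.idx) × ((Fin (M.views.arity v) → Val) × ℕ),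
        Val.null (f b) = Val.null (f b') ∧ b'.2.1 ∈ M.mv.rels b'.1 := ⟨b, rfl, hb⟩
    simp only [hηdef]
    rw [dif_pos hex]
    have hspec := choose_spec hex
    have hbb : choose hex = b := by
      apply hf
      injection hspec.1.symm
    rw [hbb]
  refine ⟨J0, η, ⟨ν, ?_, ?_, ?_, rfl⟩, hηc, ?_⟩
  · exact hevalhead
  · intro v t ht x hx hnx
    exact ⟨f ⟨v, (t, x)⟩, hνnull v t x hnx⟩
  · intro v v' t t' x x' ht ht' hx hnx hx' hnx' heq
    rw [hνnull v t x hnx, hνnull v' t' x' hnx'] at heq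
    have h1 : f ⟨v, (t, x)⟩ = f ⟨v', (t', x')⟩ := by injection heq
    have h2 := hf h1
    obtain ⟨h3, h4⟩ := Sigma.mk.inj_iff.mp h2
    subst h3
    have h5 := eq_of_heq h4
    have h6 : t = t' := congrArg Prod.fst h5
    have h7 : x = x' := congrArg Prod.snd h5
    exact ⟨rfl, heq_of_eq h6, h7⟩
  · rintro p hp
    rw [hJ0, facts_ofFacts] at hp
    obtain ⟨Sv, ⟨v, rfl⟩, hp2⟩ := hp
    obtain ⟨St, ⟨t, rfl⟩, hp3⟩ := hp2
    obtain ⟨ht, A, hA, rfl⟩ := by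
      simpa using hp3
    have hμbody := (hμb v t ht).1
    have hcomp : (fun i => η (Term.eval (ν v t) (A.args i))) =
        fun i => Term.eval (μ v t) (A.args i) := by
      funext i
      cases hargs : A.args i with
      | const c => exact hηc c
      | var x =>
        show η (ν v t x) = μ v t x
        by_cases hx : ∃ i', (M.views.defn v).head i' = Term.var x
        · -- head variable: its value is a ground constant of the tuple
          have h1 : ν v t x = t (choose hx) := by simp only [hνdef, dif_pos hx]; rfl
          have h2 := (hμb v t ht).2 (choose hx)
          rw [choose_spec hx] at h2
          -- h2 : μ v t x = t (choose hx)
          obtain ⟨c, hcc⟩ := M.mvGround v t ht (choose hx)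
          rw [h1, hcc, hηc]
          rw [← hcc]
          exact h2.symm
        · rw [hνnull v t x hx]
          exact hηcode ⟨v, (t, x)⟩ ht
    show (⟨A.rel, fun i => η (Term.eval (ν v t) (A.args i))⟩ : Fact M.S) ∈ I.facts
    rw [hcomp]  -- needs congruence on sigma
    exact hμbody A hA
  done

end Presolution
section Rank

open Classical

variable {S : Schema}

/-- Paths in the dependency graph, counting the special edges used. -/
inductive SPath (D : Set (Dep S)) : ℕ → Pos S → Pos S → Prop
  | refl (p : Pos S) : SPath D 0 p p
  | cons {p q r : Pos S} {n : ℕ} : DepEdge D p q → SPath D n q r → SPath D n p r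
  | consS {p q r : Pos S} {n : ℕ} (σ : TGD S) : Dep.tgd σ ∈ D → σ.SpecialEdge p q →
      SPath D n q r → SPath D (n + 1) p r

def specialSet (D : Set (Dep S)) : Set (Pos S × Pos S) :=
  {e | ∃ σ : TGD S, Dep.tgd σ ∈ D ∧ σ.SpecialEdge e.1 e.2}

lemma occursPos_finite (B : List (Atom S)) : {p : Pos S | ∃ x, OccursAt B x p}.Finite := by
  have hsub : {p : Pos S | ∃ x, OccursAt B x p} ⊆
      ⋃ A ∈ {A | A ∈ B}, Set.range (fun i : Fin (S.arity A.rel) => ((A.rel, (i : ℕ)) : Pos S)) := by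
    rintro p ⟨x, A, hA, hrel, i, hi, hargs⟩
    refine Set.mem_biUnion hA ⟨i, ?_⟩
    exact Prod.ext hrel hi
  exact Set.Finite.subset (Set.Finite.biUnion (B.finite_toSet) fun A _ => Set.finite_range _) hsub

def depPosPairs : Dep S → Set (Pos S × Pos S)
  | .tgd σ => {p : Pos S | ∃ x, OccursAt σ.body x p} ×ˢ {q : Pos S | ∃ x, OccursAt σ.head x q}
  | .egd _ => ∅

lemma depPosPairs_finite (d : Dep S) : (depPosPairs d).Finite := by
  cases d with
  | tgd σ => exact Set.Finite.prod (occursPos_finite _) (occursPos_finite _)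
  | egd _ => exact Set.finite_empty

lemma specialSet_finite {D : Set (Dep S)} (hD : D.Finite) : (specialSet D).Finite := by
  have hsub : specialSet D ⊆ ⋃ d ∈ D, depPosPairs d := by
    rintro ⟨p, q⟩ ⟨σ, hσ, x, y, hxp, hxh, hyh, hyn, hyq⟩
    exact Set.mem_biUnion hσ (show (p, q) ∈ depPosPairs (Dep.tgd σ) from ⟨⟨x, hxp⟩, ⟨y, hyq⟩⟩)
  exact Set.Finite.subset (Set.Finite.biUnion hD fun d _ => depPosPairs_finite d) hsub

lemma spath_bound {D : Set (Dep S)} (hwa : WeaklyAcyclic D) {n : ℕ} {q p : Pos S}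
    (h : SPath D n q p) :
    ∃ s : Finset (Pos S × Pos S), s.card = n ∧
      ∀ e ∈ s, e ∈ specialSet D ∧ Relation.ReflTransGen (DepEdge D) q e.1 := by
  classical
  induction h with
  | refl p => exact ⟨∅, rfl, by simp⟩
  | @cons p q r n he _ ih =>
    obtain ⟨s, hcard, hs⟩ := ih
    exact ⟨s, hcard, fun e hes => ⟨(hs e hes).1, Relation.ReflTransGen.head he (hs e hes).2⟩⟩
  | @consS p q r n σ hσ hspec _ ih =>
    obtain ⟨s, hcard, hs⟩ := ih
    have hnotmem : (p, q) ∉ s := by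
      intro hmem
      exact hwa ⟨σ, p, q, hσ, hspec, (hs _ hmem).2⟩
    refine ⟨insert (p, q) s, ?_, ?_⟩
    · rw [Finset.card_insert_of_notMem hnotmem, hcard]
    · rintro e hes
      rcases Finset.mem_insert.mp hes with rfl | hes'
      · exact ⟨⟨σ, hσ, hspec⟩, Relation.ReflTransGen.refl⟩
      · exact ⟨(hs e hes').1,
          Relation.ReflTransGen.head ⟨σ, hσ, Or.inr hspec⟩ (hs e hes').2⟩

noncomputable def rankBound (D : Set (Dep S)) (hD : D.Finite) : ℕ :=
  (specialSet_finite hD).toFinset.card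

lemma spath_le {D : Set (Dep S)} (hD : D.Finite) (hwa : WeaklyAcyclic D) {n : ℕ} {q p : Pos S}
    (h : SPath D n q p) : n ≤ rankBound D hD := by
  classical
  obtain ⟨s, hcard, hs⟩ := spath_bound hwa h
  rw [← hcard]
  apply Finset.card_le_card
  intro e he
  rw [Set.Finite.mem_toFinset]
  exact (hs e he).1

noncomputable def rank (D : Set (Dep S)) (p : Pos S) : ℕ := sSup {n | ∃ q, SPath D n q p}

lemma rank_spec {D : Set (Dep S)} (hD : D.Finite) (hwa : WeaklyAcyclic D) (p : Pos S) :
    (∃ q, SPath D (rank D p) q p) ∧ ∀ n q, SPath D n q p → n ≤ rank D p := by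
  have hbdd : BddAbove {n | ∃ q, SPath D n q p} :=
    ⟨rankBound D hD, fun n hn => by obtain ⟨q, hq⟩ := hn; exact spath_le hD hwa hq⟩
  have hne : {n | ∃ q, SPath D n q p}.Nonempty := ⟨0, p, SPath.refl p⟩
  exact ⟨Nat.sSup_mem hne hbdd, fun n q h => le_csSup hbdd ⟨q, h⟩⟩

lemma rank_le_bound {D : Set (Dep S)} (hD : D.Finite) (hwa : WeaklyAcyclic D) (p : Pos S) :
    rank D p ≤ rankBound D hD := by
  obtain ⟨q, hq⟩ := (rank_spec hD hwa p).1
  exact spath_le hD hwa hq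

lemma spath_snoc {D : Set (Dep S)} {n : ℕ} {a b : Pos S} (h : SPath D n a b) :
    ∀ {c}, DepEdge D b c → SPath D n a c := by
  induction h with
  | refl p => exact fun he => SPath.cons he (SPath.refl _)
  | cons he' _ ih => exact fun he => SPath.cons he' (ih he)
  | consS σ hσ hs _ ih => exact fun he => SPath.consS σ hσ hs (ih he)

lemma spath_snocS {D : Set (Dep S)} {n : ℕ} {a b : Pos S} (h : SPath D n a b) :
    ∀ {c} (σ : TGD S), Dep.tgd σ ∈ D → σ.SpecialEdge b c → SPath D (n + 1) a c := by
  induction h with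
  | refl p => exact fun σ hσ hs => SPath.consS σ hσ hs (SPath.refl _)
  | cons he' _ ih => exact fun σ hσ hs => SPath.cons he' (ih σ hσ hs)
  | consS σ' hσ' hs' _ ih => exact fun σ hσ hs => SPath.consS σ' hσ' hs' (ih σ hσ hs)

lemma rank_mono_edge {D : Set (Dep S)} (hD : D.Finite) (hwa : WeaklyAcyclic D) {p q : Pos S}
    (he : DepEdge D p q) : rank D p ≤ rank D q := by
  obtain ⟨a, ha⟩ := (rank_spec hD hwa p).1
  exact (rank_spec hD hwa q).2 _ _ (spath_snoc ha he)

lemma rank_lt_special {D : Set (Dep S)} (hD : D.Finite) (hwa : WeaklyAcyclic D) {σ : TGD S}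
    {p q : Pos S} (hσ : Dep.tgd σ ∈ D) (hs : σ.SpecialEdge p q) : rank D p < rank D q := by
  obtain ⟨a, ha⟩ := (rank_spec hD hwa p).1
  have h2 := (rank_spec hD hwa q).2 _ _ (spath_snocS ha σ hσ hs)
  omega

end Rank
section Engine

open Classical

variable {S : Schema}

/-- Lexicographic order on tuples of naturals, and its well-foundedness. -/
def VecLt {n : ℕ} (f g : Fin n → ℕ) : Prop := ∃ j, f j < g j ∧ ∀ i, i < j → f i = g i

lemma vecLt_wf (n : ℕ) : WellFounded (@VecLt n) := by
  induction n with
  | zero =>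
    constructor; intro a; constructor; rintro b ⟨j, _, _⟩; exact j.elim0
  | succ n ih =>
    have hwf : WellFounded (Prod.Lex (· < ·) (@VecLt n)) :=
      WellFounded.prod_lex (Nat.lt_wfRel.wf) ih
    have hsub : Subrelation (@VecLt (n + 1))
        (InvImage (Prod.Lex (· < ·) (@VecLt n))
          (fun f => (f 0, fun i : Fin n => f i.succ))) := by
      rintro f g ⟨j, hj, hlt⟩
      by_cases hj0 : j = 0
      · subst hj0
        exact Prod.Lex.left _ _ hj
      · obtain ⟨j', rfl⟩ : ∃ j' : Fin n, Fin.succ j' = j := by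
          rcases Fin.eq_zero_or_eq_succ j with h | ⟨j', rfl⟩
          · exact absurd h hj0
          · exact ⟨j', rfl⟩
        have h0 : f 0 = g 0 := hlt 0 (Fin.pos_iff_ne_zero.mpr hj0)
        show Prod.Lex (· < ·) VecLt (f 0, fun i : Fin n => f i.succ)
          (g 0, fun i : Fin n => g i.succ)
        rw [h0]
        exact Prod.Lex.right _ ⟨j', hj, fun i hi => hlt i.succ (by
          rwa [Fin.succ_lt_succ_iff])⟩
    exact Subrelation.wf hsub (InvImage.wf _ hwf)

lemma bodyVars_finite (B : List (Atom S)) : (BodyVars B).Finite := by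
  have hsub : BodyVars B ⊆ ⋃ A ∈ {A | A ∈ B}, ⋃ j, {x | A.args j = Term.var x} := by
    rintro x ⟨A, hA, j, hj⟩
    exact Set.mem_biUnion hA (Set.mem_iUnion.mpr ⟨j, hj⟩)
  refine Set.Finite.subset (Set.Finite.biUnion (B.finite_toSet) fun A _ =>
    Set.finite_iUnion fun j => Set.Subsingleton.finite fun a ha b hb => ?_) hsub
  have := ha.symm.trans hb
  injection this

def sharedVars (σ : TGD S) : Set ℕ := BodyVars σ.body ∩ BodyVars σ.head

lemma sharedVars_finite (σ : TGD S) : (sharedVars σ).Finite :=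
  Set.Finite.inter_of_left (bodyVars_finite _) _

lemma trigger_val_mem_adom {B : List (Atom S)} {J : Inst S} {h : ℕ → Val}
    (hb : BodyHolds h B J) {x : ℕ} (hx : x ∈ BodyVars B) : h x ∈ J.adom := by
  obtain ⟨A, hA, j, hj⟩ := hx
  have hm : (⟨A.rel, fun i => Term.eval h (A.args i)⟩ : Fact S) ∈ J.facts := hb A hA
  have h2 := mem_adom_of_fact hm j
  simpa [hj, Term.eval] using h2

lemma posLvl_of_trigger {D : Set (Dep S)} {J : Inst S} {lvlf : Val → ℕ}
    (hposlvl : ∀ p ∈ J.facts, ∀ i : Fin (S.arity p.1), lvlf (p.2 i) ≤ rank D (p.1, (i : ℕ)))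
    {B : List (Atom S)} {h : ℕ → Val} {x : ℕ} {A : Atom S} {j : Fin (S.arity A.rel)}
    (hb : BodyHolds h B J) (hA : A ∈ B) (hj : A.args j = Term.var x) :
    lvlf (h x) ≤ rank D (A.rel, (j : ℕ)) := by
  have hm : (⟨A.rel, fun i => Term.eval h (A.args i)⟩ : Fact S) ∈ J.facts := hb A hA
  have h2 := hposlvl _ hm j
  simpa [hj, Term.eval] using h2

lemma bodyHolds_hom {B : List (Atom S)} {J I : Inst S} {h : ℕ → Val} {η : Val → Val}
    (hηc : ∀ c, η (Val.const c) = Val.const c)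
    (hhom : ∀ p ∈ J.facts, (⟨p.1, fun i => η (p.2 i)⟩ : Fact S) ∈ I.facts)
    (hb : BodyHolds h B J) : BodyHolds (fun x => η (h x)) B I := by
  intro A hA
  have h1 := hhom _ (show (⟨A.rel, fun i => Term.eval h (A.args i)⟩ : Fact S) ∈ J.facts
    from hb A hA)
  have heq : (fun i => η (Term.eval h (A.args i))) =
      fun i => Term.eval (fun x => η (h x)) (A.args i) :=
    funext fun i => (term_eval_comp hηc h _).symm
  rw [heq] at h1
  exact h1

lemma adom_map (ρ : Val → Val) (J : Inst S) : (J.map ρ).adom = ρ '' J.adom := by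
  ext a
  constructor
  · rintro ⟨p, hp, i, hi⟩
    rw [map_facts] at hp
    obtain ⟨q, hq, rfl⟩ := hp
    exact ⟨q.2 i, mem_adom_of_fact hq i, hi⟩
  · rintro ⟨b, ⟨p, hp, i, hi⟩, rfl⟩
    refine ⟨⟨p.1, fun i => ρ (p.2 i)⟩, ⟨p, hp, rfl⟩, i, ?_⟩
    show ρ (p.2 i) = ρ b
    rw [hi]

/-- The state of the guided chase. -/
structure GState (M : MVSetting) : Type where
  J : Inst M.S
  eta : Val → Val
  lvl : Val → ℕ
  Used : Set Val
  Fired : Set (TGD M.S × (ℕ → Val))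

variable {M : MVSetting}

/-- The a-priori domain of fired trigger tuples of a level. -/
def BigSet (s : GState M) (r : ℕ) : Set (TGD M.S × (ℕ → Val)) :=
  {e | Dep.tgd e.1 ∈ M.deps ∧ (∀ x, x ∉ sharedVars e.1 → e.2 x = Val.const 0) ∧
    ∀ x ∈ sharedVars e.1, e.2 x ∈ s.Used ∧ s.lvl (e.2 x) < r}

lemma funcSet_finite {s : Set ℕ} (hs : s.Finite) {A : Set Val} (hA : A.Finite) :
    {f : ℕ → Val | (∀ x, x ∉ s → f x = Val.const 0) ∧ ∀ x ∈ s, f x ∈ A}.Finite := by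
  haveI := hs.to_subtype
  haveI := hA.to_subtype
  have hfin : Finite ↥{f : ℕ → Val | (∀ x, x ∉ s → f x = Val.const 0) ∧ ∀ x ∈ s, f x ∈ A} := by
    refine Finite.of_injective
      (fun f (x : s) => (⟨f.1 x, f.2.2 x x.2⟩ : A)) ?_
    intro f g hfg
    apply Subtype.ext
    funext x
    by_cases hx : x ∈ s
    · exact congrArg Subtype.val (congrFun hfg ⟨x, hx⟩)
    · rw [f.2.1 x hx, g.2.1 x hx]
  exact Set.toFinite _

def tgdPairs (A : Set Val) : Dep S → Set (TGD S × (ℕ → Val))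
  | .tgd σ => {σ} ×ˢ {f : ℕ → Val |
      (∀ x, x ∉ sharedVars σ → f x = Val.const 0) ∧ ∀ x ∈ sharedVars σ, f x ∈ A}
  | .egd _ => ∅

lemma bigSet_finite (s : GState M) (hu : s.Used.Finite) (r : ℕ) : (BigSet s r).Finite := by
  have hsub : BigSet s r ⊆ ⋃ d ∈ M.deps, tgdPairs s.Used d := by
    rintro ⟨σ, f⟩ ⟨h1, h2, h3⟩
    exact Set.mem_biUnion h1 ⟨rfl, h2, fun x hx => (h3 x hx).1⟩
  refine Set.Finite.subset (Set.Finite.biUnion M.depsFinite fun d _ => ?_) hsub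
  cases d with
  | tgd σ =>
    exact Set.Finite.prod (Set.finite_singleton _) (funcSet_finite (sharedVars_finite σ) hu)
  | egd _ => exact Set.finite_empty

/-- The invariant of the guided chase. -/
structure GInv (M : MVSetting) (I : Inst M.S) (s : GState M) : Prop where
  hfin : s.J.facts.Finite
  hetac : ∀ c, s.eta (Val.const c) = Val.const c
  hhom : ∀ p ∈ s.J.facts, (⟨p.1, fun i => s.eta (p.2 i)⟩ : Fact M.S) ∈ I.facts
  husedfin : s.Used.Finite
  hadom : s.J.adom ⊆ s.Used
  hmvused : ∀ v, ∀ t ∈ M.mv.rels v, ∀ i, t i ∈ s.Used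
  hlvlc : ∀ c, s.lvl (Val.const c) = 0
  hposlvl : ∀ p ∈ s.J.facts, ∀ i : Fin (M.S.arity p.1),
    s.lvl (p.2 i) ≤ rank M.deps (p.1, (i : ℕ))
  hfired : ∀ e ∈ s.Fired, Dep.tgd e.1 ∈ M.deps ∧
    (∀ x, x ∉ sharedVars e.1 → e.2 x = Val.const 0) ∧
    (∀ x ∈ sharedVars e.1, e.2 x ∈ s.Used)
  hfiredsat : ∀ e ∈ s.Fired,
    (∃ x ∈ sharedVars e.1, e.2 x ∉ s.J.adom ∧ ∃ n, e.2 x = Val.null n) ∨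
    ∃ g : ℕ → Val, (∀ x ∈ sharedVars e.1, g x = e.2 x) ∧ BodyHolds g e.1.head s.J

noncomputable def nullCount (J : Inst M.S) : ℕ :=
  {a | a ∈ J.adom ∧ ∃ n, a = Val.null n}.ncard

noncomputable def measN (M : MVSetting) : ℕ := rankBound M.deps M.depsFinite + 3

noncomputable def meas (s : GState M) : Fin (measN M) → ℕ := fun j =>
  if (j : ℕ) + 1 = measN M then nullCount s.J else ((BigSet s (j : ℕ)) \ s.Fired).ncard

lemma nullSet_finite {J : Inst M.S} (hfin : J.facts.Finite) :
    {a | a ∈ J.adom ∧ ∃ n, a = Val.null n}.Finite :=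
  (adom_finite hfin).subset (fun a ha => ha.1)

/-- If the view-image of a trigger lands in `I`, its head tuple is a fact of `MV`. -/
lemma trigger_to_mv {I : Inst M.S} (hvb : M.ValidBase I) {s : GState M} (inv : GInv M I s)
    {v : M.views.idx} {h : ℕ → Val} (hb : BodyHolds h (M.views.defn v).body s.J) :
    (fun i => Term.eval (fun x => s.eta (h x)) ((M.views.defn v).head i)) ∈ M.mv.rels v := by
  have h1 : (fun i => Term.eval (fun x => s.eta (h x)) ((M.views.defn v).head i)) ∈
      (M.views.defn v).answer I :=
    ⟨fun x => s.eta (h x), bodyHolds_hom inv.hetac inv.hhom hb, rfl⟩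
  rw [hvb.2.2 v] at h1
  exact h1

end Engine
section TgdFire

open Classical

variable {M : MVSetting}

lemma tgd_fire {I : Inst M.S} (hwa : WeaklyAcyclic M.deps) (hvb : M.ValidBase I)
    {s : GState M} (inv : GInv M I s) {σ : TGD M.S} (hσ : Dep.tgd σ ∈ M.deps)
    {h : ℕ → Val} (hb : BodyHolds h σ.body s.J)
    (hns : ¬∃ g : ℕ → Val, (∀ x ∈ BodyVars σ.body, g x = h x) ∧ BodyHolds g σ.head s.J) :
    ∃ s' : GState M, GInv M I s' ∧ tgdStep σ s.J s'.J ∧ VecLt (meas s') (meas s) := by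
  obtain ⟨hcfb, hcfh⟩ : (∀ A ∈ σ.body, A.ConstantFree) ∧ (∀ A ∈ σ.head, A.ConstantFree) :=
    M.depsConstantFree _ hσ
  obtain ⟨N, hN⟩ := exists_fresh_nulls s.Used inv.husedfin
  set exv : Set ℕ := {x | x ∈ BodyVars σ.head ∧ x ∉ BodyVars σ.body} with hexv
  set h' : ℕ → Val := fun x => if x ∈ exv then Val.null (N + x) else h x with hh'
  set J' : Inst M.S := Inst.ofFacts (s.J.facts ∪ factSet σ.head h') with hJ'
  set freshSet : Set Val := {a | ∃ x ∈ exv, a = Val.null (N + x)} with hfreshSet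
  have hfreshUsed : ∀ a ∈ freshSet, a ∉ s.Used := by
    rintro a ⟨x, hx, rfl⟩
    exact hN (N + x) (Nat.le_add_right _ _)
  have hexfin : exv.Finite := (bodyVars_finite σ.head).subset (fun x hx => hx.1)
  have hfreshfin : freshSet.Finite := by
    have he : freshSet = (fun x => Val.null (N + x)) '' exv := by
      ext a; constructor
      · rintro ⟨x, hx, rfl⟩; exact ⟨x, hx, rfl⟩
      · rintro ⟨x, hx, rfl⟩; exact ⟨x, hx, rfl⟩
    rw [he]; exact hexfin.image _
  -- the homomorphism extension via I ⊨ σ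
  obtain ⟨μ, hμa, hμh⟩ :=
    (hvb.2.1 _ hσ : σ.holds I) (fun x => s.eta (h x)) (bodyHolds_hom inv.hetac inv.hhom hb)
  set η' : Val → Val := fun a =>
    if ha : ∃ x, x ∈ exv ∧ a = Val.null (N + x) then μ (choose ha) else s.eta a with hη'
  have hη'fresh : ∀ x ∈ exv, η' (Val.null (N + x)) = μ x := by
    intro x hx
    have hex : ∃ x', x' ∈ exv ∧ Val.null (N + x) = Val.null (N + x') := ⟨x, hx, rfl⟩
    simp only [hη', dif_pos hex]
    have hspec := choose_spec hex
    have : choose hex = x := by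
      have h2 : N + x = N + choose hex := by injection hspec.2
      omega
    rw [this]
  have hη'used : ∀ a ∈ s.Used, η' a = s.eta a := by
    intro a ha
    simp only [hη']
    rw [dif_neg]
    rintro ⟨x, hx, rfl⟩
    exact hN (N + x) (Nat.le_add_right _ _) ha
  have hη'c : ∀ c, η' (Val.const c) = Val.const c := by
    intro c
    simp only [hη']
    rw [dif_neg]
    · exact inv.hetac c
    · rintro ⟨x, hx, hcc⟩
      exact Val.noConfusion hcc
  -- levels
  set shF : Finset ℕ := (sharedVars_finite σ).toFinset with hshF
  set L : ℕ := if (sharedVars σ).Nonempty then (shF.sup fun x => s.lvl (h x)) + 1 else 0 with hL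
  set lvl' : Val → ℕ := fun a => if a ∈ freshSet then L else s.lvl a with hlvl'
  have hlvl'used : ∀ a ∈ s.Used, lvl' a = s.lvl a := by
    intro a ha
    simp only [hlvl']
    rw [if_neg (fun hf => hfreshUsed a hf ha)]
  set τ : ℕ → Val := fun x => if x ∈ sharedVars σ then h x else Val.const 0 with hτ
  set s' : GState M := ⟨J', η', lvl', s.Used ∪ freshSet, insert (σ, τ) s.Fired⟩ with hs'
  -- facts of J'
  have hfacts' : J'.facts = s.J.facts ∪ factSet σ.head h' := rfl
  have hadom' : J'.adom ⊆ s.J.adom ∪ freshSet := by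
    rintro a ⟨p, hp, i, hi⟩
    rw [hfacts'] at hp
    rcases hp with hp | hp
    · exact Or.inl ⟨p, hp, i, hi⟩
    · obtain ⟨A, hA, rfl⟩ := hp
      obtain ⟨y, hy⟩ := hcfh A hA i
      rw [← hi]
      show Term.eval h' (A.args i) ∈ _
      rw [hy]
      show h' y ∈ _
      by_cases hyex : y ∈ exv
      · exact Or.inr (by rw [hh']; simp only [if_pos hyex]; exact ⟨y, hyex, rfl⟩)
      · have hyb : y ∈ BodyVars σ.body := by
          by_contra hyb
          exact hyex ⟨⟨A, hA, i, hy⟩, hyb⟩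
        rw [hh']
        simp only [if_neg hyex]
        exact Or.inl (trigger_val_mem_adom hb hyb)
  have hstep : tgdStep σ s.J J' := by
    refine ⟨h, hb, hns, h', ?_, ?_, ?_, rfl⟩
    · intro x hx
      rw [hh']
      simp only [if_neg (fun hc : x ∈ exv => hc.2 hx)]
    · intro x hx hnx
      have hxe : x ∈ exv := ⟨hx, hnx⟩
      rw [hh']
      simp only [if_pos hxe]
      exact ⟨⟨N + x, rfl⟩, fun hmem => hN (N + x) (Nat.le_add_right _ _) (inv.hadom hmem)⟩
    · intro x hx y hy hxy
      simp only [Set.mem_setOf_eq] at hx hy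
      rw [hh'] at hxy
      simp only [if_pos (show x ∈ exv from hx), if_pos (show y ∈ exv from hy)] at hxy
      injection hxy with hxy'
      omega
  -- the new fired pair and its levels
  have hτUsed : ∀ x ∈ sharedVars σ, τ x ∈ s.Used := by
    intro x hx
    rw [hτ]
    simp only [if_pos hx]
    exact inv.hadom (trigger_val_mem_adom hb hx.1)
  have hqmemL : (σ, τ) ∈ BigSet s L := by
    refine ⟨hσ, fun x hx => ?_, ?_⟩
    · show τ x = Val.const 0
      rw [hτ]; exact if_neg hx
    · intro x hx
      have hx' : x ∈ sharedVars σ := hx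
      refine ⟨hτUsed x hx', ?_⟩
      have hne : (sharedVars σ).Nonempty := ⟨x, hx'⟩
      have hxF : x ∈ shF := by rw [hshF, Set.Finite.mem_toFinset]; exact hx'
      have hle : s.lvl (h x) ≤ shF.sup fun y => s.lvl (h y) := Finset.le_sup (f := fun y => s.lvl (h y)) hxF
      have hτx : τ x = h x := by rw [hτ]; exact if_pos hx'
      show s.lvl (τ x) < L
      rw [hτx, hL, if_pos hne]
      omega
  have hqnotFired : (σ, τ) ∉ s.Fired := by
    intro hmem
    rcases inv.hfiredsat _ hmem with ⟨x, hx, hnot, _⟩ | ⟨g, hga, hgh⟩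
    · apply hnot
      show τ x ∈ s.J.adom
      rw [hτ]; simp only [if_pos hx]
      exact trigger_val_mem_adom hb hx.1
    · apply hns
      refine ⟨fun x => if x ∈ BodyVars σ.body then h x else g x, fun x hx => by simp [hx], ?_⟩
      refine bodyHolds_congr (fun y hy => ?_) hgh
      by_cases hyb : y ∈ BodyVars σ.body
      · simp only [if_pos hyb]
        have := hga y ⟨hyb, hy⟩
        rw [this, hτ]
        simp only [if_pos (show y ∈ sharedVars σ from ⟨hyb, hy⟩)]
      · simp only [if_neg hyb]
  -- invariant for s'
  have hinv' : GInv M I s' := by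
    refine ⟨?_, hη'c, ?_, ?_, ?_, ?_, ?_, ?_, ?_, ?_⟩
    · exact inv.hfin.union (factSet_finite _ _)
    · -- hom
      rintro p hp
      rw [show s'.J.facts = s.J.facts ∪ factSet σ.head h' from rfl] at hp
      rcases hp with hp | hp
      · have he : (fun i => η' (p.2 i)) = fun i => s.eta (p.2 i) :=
          funext fun i => hη'used _ (inv.hadom (mem_adom_of_fact hp i))
        show (⟨p.1, fun i => η' (p.2 i)⟩ : Fact M.S) ∈ I.facts
        rw [he]
        exact inv.hhom p hp
      · obtain ⟨A, hA, rfl⟩ := hp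
        have he : (fun i => η' (Term.eval h' (A.args i))) = fun i => Term.eval μ (A.args i) := by
          funext i
          obtain ⟨y, hy⟩ := hcfh A hA i
          rw [hy]
          show η' (h' y) = μ y
          by_cases hyex : y ∈ exv
          · rw [hh']
            simp only [if_pos hyex]
            exact hη'fresh y hyex
          · have hyb : y ∈ BodyVars σ.body := by
              by_contra hyb
              exact hyex ⟨⟨A, hA, i, hy⟩, hyb⟩
            rw [hh']
            simp only [if_neg hyex]
            rw [hη'used _ (inv.hadom (trigger_val_mem_adom hb hyb))]
            exact (hμa y hyb).symm
        show (⟨A.rel, fun i => η' (Term.eval h' (A.args i))⟩ : Fact M.S) ∈ I.facts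
        rw [he]
        exact hμh A hA
    · exact inv.husedfin.union hfreshfin
    · exact fun a ha => by
        rcases hadom' ha with h1 | h1
        · exact Or.inl (inv.hadom h1)
        · exact Or.inr h1
    · exact fun v t ht i => Or.inl (inv.hmvused v t ht i)
    · intro c
      show lvl' (Val.const c) = 0
      rw [hlvl']
      simp only [if_neg (show Val.const c ∉ freshSet by rintro ⟨x, hx, hcc⟩; exact Val.noConfusion hcc)]
      exact inv.hlvlc c
    · -- position levels
      rintro p hp i
      rw [show s'.J.facts = s.J.facts ∪ factSet σ.head h' from rfl] at hp
      rcases hp with hp | hp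
      · have := inv.hposlvl p hp i
        rwa [show s'.lvl (p.2 i) = s.lvl (p.2 i) from
          hlvl'used _ (inv.hadom (mem_adom_of_fact hp i))]
      · obtain ⟨A, hA, rfl⟩ := hp
        obtain ⟨y, hy⟩ := hcfh A hA i
        show lvl' (Term.eval h' (A.args i)) ≤ _
        rw [hy]
        show lvl' (h' y) ≤ rank M.deps (A.rel, (i : ℕ))
        by_cases hyex : y ∈ exv
        · rw [hh']
          simp only [if_pos hyex]
          rw [hlvl']
          simp only [if_pos (show Val.null (N + y) ∈ freshSet from ⟨y, hyex, rfl⟩)]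
          -- L ≤ rank of target
          rcases Set.eq_empty_or_nonempty (sharedVars σ) with hsh | hsh
          · rw [hL, if_neg (by rw [hsh]; exact Set.not_nonempty_empty)]
            exact Nat.zero_le _
          · rw [hL, if_pos hsh]
            have hall : ∀ x ∈ shF, s.lvl (h x) < rank M.deps (A.rel, (i : ℕ)) := by
              intro x hxF
              have hx : x ∈ sharedVars σ := by rwa [hshF, Set.Finite.mem_toFinset] at hxF
              obtain ⟨Ab, hAb, jb, hjb⟩ := hx.1
              have hlvlle : s.lvl (h x) ≤ rank M.deps (Ab.rel, (jb : ℕ)) :=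
                posLvl_of_trigger inv.hposlvl hb hAb hjb
              have hspec : σ.SpecialEdge (Ab.rel, (jb : ℕ)) (A.rel, (i : ℕ)) :=
                ⟨x, y, ⟨Ab, hAb, rfl, jb, rfl, hjb⟩, hx.2, hyex.1, hyex.2,
                  ⟨A, hA, rfl, i, rfl, hy⟩⟩
              have hrlt := rank_lt_special M.depsFinite hwa hσ hspec
              omega
            obtain ⟨x0, hx0⟩ := hsh
            have h0 : 0 < rank M.deps (A.rel, (i : ℕ)) := by
              have := hall x0 (by rw [hshF, Set.Finite.mem_toFinset]; exact hx0)
              omega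
            have := (Finset.sup_lt_iff h0).mpr hall
            omega
        · have hyb : y ∈ BodyVars σ.body := by
            by_contra hyb
            exact hyex ⟨⟨A, hA, i, hy⟩, hyb⟩
          rw [hh']
          simp only [if_neg hyex]
          rw [hlvl'used _ (inv.hadom (trigger_val_mem_adom hb hyb))]
          obtain ⟨Ab, hAb, jb, hjb⟩ := hyb
          have hlvlle : s.lvl (h y) ≤ rank M.deps (Ab.rel, (jb : ℕ)) :=
            posLvl_of_trigger inv.hposlvl hb hAb hjb
          have hreg : σ.RegularEdge (Ab.rel, (jb : ℕ)) (A.rel, (i : ℕ)) :=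
            ⟨y, ⟨Ab, hAb, rfl, jb, rfl, hjb⟩, ⟨A, hA, i, hy⟩, ⟨A, hA, rfl, i, rfl, hy⟩⟩
          have hmono := rank_mono_edge M.depsFinite hwa ⟨σ, hσ, Or.inl hreg⟩
          omega
    · -- hfired
      rintro e he
      rcases Set.mem_insert_iff.mp he with rfl | he'
      · exact ⟨hσ, fun x hx => by rw [hτ]; simp only [if_neg hx],
          fun x hx => Or.inl (hτUsed x hx)⟩
      · obtain ⟨h1, h2, h3⟩ := inv.hfired e he'
        exact ⟨h1, h2, fun x hx => Or.inl (h3 x hx)⟩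
    · -- hfiredsat
      rintro e he
      rcases Set.mem_insert_iff.mp he with rfl | he'
      · refine Or.inr ⟨h', fun x hx => ?_, ?_⟩
        · rw [hh', hτ]
          simp only [if_neg (fun hc : x ∈ exv => hc.2 hx.1), if_pos hx]
        · intro A hA
          have : (⟨A.rel, fun i => Term.eval h' (A.args i)⟩ : Fact M.S) ∈ s'.J.facts :=
            Or.inr ⟨A, hA, rfl⟩
          exact this
      · rcases inv.hfiredsat e he' with ⟨x, hx, hnot, hnull⟩ | ⟨g, hga, hgh⟩
        · refine Or.inl ⟨x, hx, ?_, hnull⟩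
          intro hmem
          rcases hadom' hmem with h1 | h1
          · exact hnot h1
          · exact hfreshUsed _ h1 ((inv.hfired e he').2.2 x hx)
        · exact Or.inr ⟨g, hga, bodyHolds_mono (Set.subset_union_left) hgh⟩
  -- the measure decreases
  have hK1 : ∀ r : ℕ, r ≤ L → BigSet s' r = BigSet s r := by
    intro r hr
    ext e
    constructor
    · rintro ⟨h1, h2, h3⟩
      refine ⟨h1, h2, fun x hx => ?_⟩
      obtain ⟨hu, hl⟩ := h3 x hx
      rcases hu with hu | hu
      · refine ⟨hu, ?_⟩
        rwa [show s'.lvl (e.2 x) = s.lvl (e.2 x) from hlvl'used _ hu] at hl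
      · exfalso
        rw [show s'.lvl (e.2 x) = L from by rw [hs']; show lvl' _ = L; rw [hlvl']; simp only [if_pos hu]] at hl
        omega
    · rintro ⟨h1, h2, h3⟩
      refine ⟨h1, h2, fun x hx => ?_⟩
      obtain ⟨hu, hl⟩ := h3 x hx
      refine ⟨Or.inl hu, ?_⟩
      rwa [show s'.lvl (e.2 x) = s.lvl (e.2 x) from hlvl'used _ hu]
  have hfind : ∃ r, (σ, τ) ∈ BigSet s r := ⟨L, hqmemL⟩
  set j₀ : ℕ := Nat.find hfind with hj₀
  have hj₀mem : (σ, τ) ∈ BigSet s j₀ := Nat.find_spec hfind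
  have hj₀L : j₀ ≤ L := Nat.find_min' hfind hqmemL
  have hLbound : L ≤ rankBound M.deps M.depsFinite + 1 := by
    rcases Set.eq_empty_or_nonempty (sharedVars σ) with hsh | hsh
    · rw [hL, if_neg (by rw [hsh]; exact Set.not_nonempty_empty)]
      omega
    · rw [hL, if_pos hsh]
      have hsup : (shF.sup fun x => s.lvl (h x)) ≤ rankBound M.deps M.depsFinite := by
        apply Finset.sup_le
        intro x hxF
        have hx : x ∈ sharedVars σ := by rwa [hshF, Set.Finite.mem_toFinset] at hxF
        obtain ⟨Ab, hAb, jb, hjb⟩ := hx.1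
        calc s.lvl (h x) ≤ rank M.deps (Ab.rel, (jb : ℕ)) :=
              posLvl_of_trigger inv.hposlvl hb hAb hjb
        _ ≤ rankBound M.deps M.depsFinite := rank_le_bound M.depsFinite hwa _
      omega
  have hj₀small : j₀ + 1 < measN M := by
    have : measN M = rankBound M.deps M.depsFinite + 3 := rfl
    omega
  refine ⟨s', hinv', hstep, ⟨⟨j₀, by omega⟩, ?_, ?_⟩⟩
  · -- strict decrease at j₀
    show meas s' ⟨j₀, _⟩ < meas s ⟨j₀, _⟩
    rw [meas, meas]
    simp only [if_neg (show j₀ + 1 ≠ measN M by omega)]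
    rw [hK1 j₀ hj₀L]
    have hfinr : (BigSet s j₀ \ s.Fired).Finite := (bigSet_finite s inv.husedfin j₀).diff
    have hq : (σ, τ) ∈ BigSet s j₀ \ s.Fired := ⟨hj₀mem, hqnotFired⟩
    have hss : BigSet s j₀ \ s'.Fired ⊂ BigSet s j₀ \ s.Fired := by
      rw [Set.ssubset_def]
      constructor
      · rintro e ⟨he1, he2⟩
        exact ⟨he1, fun hf => he2 (Set.mem_insert_of_mem _ hf)⟩
      · intro hsub
        have := hsub hq
        exact this.2 (Set.mem_insert _ _)
    exact Set.ncard_lt_ncard hss hfinr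
  · -- equality below j₀
    rintro ⟨i, hi⟩ hlt
    have hilt : i < j₀ := hlt
    show meas s' ⟨i, _⟩ = meas s ⟨i, _⟩
    rw [meas, meas]
    simp only [if_neg (show i + 1 ≠ measN M by omega)]
    rw [hK1 i (by omega)]
    have hqnot : (σ, τ) ∉ BigSet s i := Nat.find_min hfind hilt
    congr 1
    ext e
    simp only [Set.mem_diff, Set.mem_insert_iff]
    constructor
    · rintro ⟨he1, he2⟩
      exact ⟨he1, fun hf => he2 (Or.inr hf)⟩
    · rintro ⟨he1, he2⟩
      refine ⟨he1, ?_⟩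
      rintro (rfl | hf)
      · exact hqnot he1
      · exact he2 hf

end TgdFire
section OtherFires

open Classical

variable {M : MVSetting}

lemma bigSet_congr {s s' : GState M} (hU : s'.Used = s.Used) (hl : s'.lvl = s.lvl) (r : ℕ) :
    BigSet s' r = BigSet s r := by
  unfold BigSet
  rw [hU, hl]

lemma meas_lt_of_nullCount {s s' : GState M} (hU : s'.Used = s.Used) (hl : s'.lvl = s.lvl)
    (hF : s'.Fired = s.Fired) (hn : nullCount s'.J < nullCount s.J) :
    VecLt (meas s') (meas s) := by
  have hpos : 0 < measN M := by
    show 0 < rankBound M.deps M.depsFinite + 3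
    omega
  refine ⟨⟨measN M - 1, by omega⟩, ?_, ?_⟩
  · show meas s' ⟨measN M - 1, _⟩ < meas s ⟨measN M - 1, _⟩
    rw [meas, meas]
    simp only [if_pos (show (measN M - 1) + 1 = measN M by omega)]
    exact hn
  · rintro ⟨i, hi⟩ hlt
    have hilt : i < measN M - 1 := hlt
    show meas s' ⟨i, _⟩ = meas s ⟨i, _⟩
    rw [meas, meas]
    simp only [if_neg (show ¬(i + 1 = measN M) by omega)]
    rw [bigSet_congr hU hl, hF]

lemma nullCount_lt {J J' : Inst M.S} (hfin : J.facts.Finite) {rem : Val}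
    (hsub : {a | a ∈ J'.adom ∧ ∃ n, a = Val.null n} ⊆
      {a | a ∈ J.adom ∧ ∃ n, a = Val.null n} \ {rem})
    (hrem : rem ∈ J.adom) (hremn : ∃ n, rem = Val.null n) : nullCount J' < nullCount J := by
  have hfinN := nullSet_finite (M := M) hfin
  have hmem : rem ∈ {a | a ∈ J.adom ∧ ∃ n, a = Val.null n} := ⟨hrem, hremn⟩
  have hss : {a | a ∈ J'.adom ∧ ∃ n, a = Val.null n} ⊂
      {a | a ∈ J.adom ∧ ∃ n, a = Val.null n} := by
    rw [Set.ssubset_def]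
    refine ⟨hsub.trans Set.diff_subset, fun hsup => ?_⟩
    exact (hsub (hsup hmem)).2 rfl
  exact Set.ncard_lt_ncard hss hfinN

/-- Collapsing one null value into another value of no greater level. -/
lemma collapse_state {I : Inst M.S} {s : GState M} (inv : GInv M I s)
    {rem kept : Val} (hremn : ∃ n, rem = Val.null n) (hrema : rem ∈ s.J.adom)
    (hkepta : kept ∈ s.J.adom) (hlvlk : s.lvl kept ≤ s.lvl rem)
    (hηeq : s.eta kept = s.eta rem) (hnek : kept ≠ rem) :
    GInv M I ⟨s.J.map (fun a => if a = rem then kept else a), s.eta, s.lvl, s.Used, s.Fired⟩ ∧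
      VecLt
        (meas (⟨s.J.map (fun a => if a = rem then kept else a), s.eta, s.lvl, s.Used,
          s.Fired⟩ : GState M)) (meas s) := by
  set ρ : Val → Val := fun a => if a = rem then kept else a with hρ
  have hρc : ∀ c, ρ (Val.const c) = Val.const c := by
    intro c
    rw [hρ]
    simp only
    rw [if_neg]
    obtain ⟨n, rfl⟩ := hremn
    exact fun hc => Val.noConfusion hc
  have hρcase : ∀ a, ρ a = a ∨ (a = rem ∧ ρ a = kept) := by
    intro a
    by_cases ha : a = rem
    · exact Or.inr ⟨ha, by rw [hρ]; simp only [if_pos ha]⟩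
    · exact Or.inl (by rw [hρ]; simp only [if_neg ha])
  have hρeta : ∀ a, s.eta (ρ a) = s.eta a := by
    intro a
    rcases hρcase a with h1 | ⟨rfl, h2⟩
    · rw [h1]
    · rw [h2, hηeq]
  have hρnotrem : ∀ a, ρ a ≠ rem := by
    intro a
    rcases hρcase a with h1 | ⟨rfl, h2⟩
    · rw [h1]
      intro har
      subst har
      rw [hρ] at h1
      simp only [if_pos rfl] at h1
      exact hnek h1
    · rw [h2]; exact hnek
  have hadom' : (s.J.map ρ).adom = ρ '' s.J.adom := adom_map ρ s.J
  constructor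
  · refine ⟨inv.hfin.image _, inv.hetac, ?_, inv.husedfin, ?_, inv.hmvused, inv.hlvlc, ?_, inv.hfired, ?_⟩
    · -- hom
      rintro p hp
      rw [map_facts] at hp
      obtain ⟨q, hq, rfl⟩ := hp
      have he : (fun i => s.eta (ρ (q.2 i))) = fun i => s.eta (q.2 i) :=
        funext fun i => hρeta (q.2 i)
      show (⟨q.1, fun i => s.eta (ρ (q.2 i))⟩ : Fact M.S) ∈ I.facts
      rw [he]
      exact inv.hhom q hq
    · -- adom
      intro a ha
      rw [hadom'] at ha
      obtain ⟨b, hb, rfl⟩ := ha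
      rcases hρcase b with h1 | ⟨rfl, h2⟩
      · rw [h1]; exact inv.hadom hb
      · rw [h2]; exact inv.hadom hkepta
    · -- poslvl
      rintro p hp i
      rw [map_facts] at hp
      obtain ⟨q, hq, rfl⟩ := hp
      show s.lvl (ρ (q.2 i)) ≤ _
      rcases hρcase (q.2 i) with h1 | ⟨heq2, h2⟩
      · rw [h1]; exact inv.hposlvl q hq i
      · rw [h2]
        calc s.lvl kept ≤ s.lvl rem := hlvlk
        _ ≤ _ := by rw [← heq2]; exact inv.hposlvl q hq i
    · -- firedsat
      rintro e he
      rcases inv.hfiredsat e he with ⟨x, hx, hnot, hnull⟩ | ⟨g, hga, hgh⟩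
      · refine Or.inl ⟨x, hx, ?_, hnull⟩
        intro hmem
        rw [hadom'] at hmem
        obtain ⟨b, hb, hbe⟩ := hmem
        rcases hρcase b with h1 | ⟨rfl, h2⟩
        · rw [h1] at hbe; rw [← hbe] at hnot; exact hnot hb
        · rw [h2] at hbe; rw [← hbe] at hnot; exact hnot hkepta
      · by_cases hch : ∃ x ∈ sharedVars e.1, e.2 x = rem
        · obtain ⟨x, hx, hex⟩ := hch
          refine Or.inl ⟨x, hx, ?_, hex ▸ hremn⟩
          intro hmem
          rw [hadom'] at hmem
          obtain ⟨b, hb, hbe⟩ := hmem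
          rw [hex] at hbe
          exact hρnotrem b hbe
        · push_neg at hch
          refine Or.inr ⟨fun x => ρ (g x), fun x hx => ?_, bodyHolds_map hρc hgh⟩
          show ρ (g x) = e.2 x
          rw [hga x hx]
          rcases hρcase (e.2 x) with h1 | ⟨heq2, _⟩
          · exact h1
          · exact absurd heq2 (hch x hx)
  · refine meas_lt_of_nullCount rfl rfl rfl ?_
    refine nullCount_lt inv.hfin ?_ hrema hremn
    rintro a ⟨ha, hn⟩
    rw [hadom'] at ha
    obtain ⟨b, hb, rfl⟩ := ha
    refine ⟨⟨?_, hn⟩, fun hbm => hρnotrem b (by simpa using hbm)⟩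
    rcases hρcase b with h1 | ⟨rfl, h2⟩
    · rw [h1]; exact hb
    · rw [h2]; exact hkepta

lemma egd_fire {I : Inst M.S} (hvb : M.ValidBase I)
    {s : GState M} (inv : GInv M I s) {σ : EGD M.S} (hσ : Dep.egd σ ∈ M.deps)
    {h : ℕ → Val} (hb : BodyHolds h σ.body s.J) (hne : h σ.lhs ≠ h σ.rhs) :
    ∃ s' : GState M, GInv M I s' ∧ egdStepOk σ s.J s'.J ∧ VecLt (meas s') (meas s) := by
  have hIσ : σ.holds I := hvb.2.1 _ hσ
  have hηb : BodyHolds (fun x => s.eta (h x)) σ.body I := bodyHolds_hom inv.hetac inv.hhom hb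
  have hlr : σ.lhs ≠ σ.rhs := fun e => hne (congrArg h e)
  have hlhsb : σ.lhs ∈ BodyVars σ.body := by
    by_contra hl
    have hcongr : ∀ w : Val, BodyHolds (fun x => if x = σ.lhs then w else s.eta (h x)) σ.body I :=
      fun w => bodyHolds_congr (fun x hx => by rw [if_neg]; rintro rfl; exact hl hx) hηb
    have h0 := hIσ _ (hcongr (Val.const 0))
    have h1 := hIσ _ (hcongr (Val.const 1))
    simp only [if_pos rfl, if_neg (fun hc : σ.rhs = σ.lhs => hlr hc.symm)] at h0 h1
    rw [← h0] at h1
    exact absurd h1 (by simp)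
  have hrhsb : σ.rhs ∈ BodyVars σ.body := by
    by_contra hr
    have hcongr : ∀ w : Val, BodyHolds (fun x => if x = σ.rhs then w else s.eta (h x)) σ.body I :=
      fun w => bodyHolds_congr (fun x hx => by rw [if_neg]; rintro rfl; exact hr hx) hηb
    have h0 := hIσ _ (hcongr (Val.const 0))
    have h1 := hIσ _ (hcongr (Val.const 1))
    simp only [if_pos rfl, if_neg hlr] at h0 h1
    rw [h0] at h1
    exact absurd h1 (by simp)
  have hηeq : s.eta (h σ.lhs) = s.eta (h σ.rhs) := hIσ _ hηb
  have hlada : h σ.lhs ∈ s.J.adom := trigger_val_mem_adom hb hlhsb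
  have hrada : h σ.rhs ∈ s.J.adom := trigger_val_mem_adom hb hrhsb
  by_cases hln : ∃ n, h σ.lhs = Val.null n
  · by_cases hrn : (∃ m, h σ.rhs = Val.null m) ∧ s.lvl (h σ.lhs) < s.lvl (h σ.rhs)
    · obtain ⟨hinv', hlt⟩ := collapse_state inv (rem := h σ.rhs) (kept := h σ.lhs)
        hrn.1 hrada hlada (le_of_lt hrn.2) hηeq hne
      exact ⟨_, hinv', ⟨h, hb, hne, Or.inr ⟨hrn.1, rfl⟩⟩, hlt⟩
    · have hlvlk : s.lvl (h σ.rhs) ≤ s.lvl (h σ.lhs) := by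
        by_cases hrn2 : ∃ m, h σ.rhs = Val.null m
        · have hnl : ¬ s.lvl (h σ.lhs) < s.lvl (h σ.rhs) := fun hlt => hrn ⟨hrn2, hlt⟩
          omega
        · cases hc : h σ.rhs with
          | null m => exact absurd ⟨m, hc⟩ hrn2
          | const c => rw [inv.hlvlc]; omega
      obtain ⟨hinv', hlt⟩ := collapse_state inv hln hlada hrada hlvlk hηeq.symm (Ne.symm hne)
      exact ⟨_, hinv', ⟨h, hb, hne, Or.inl ⟨hln, rfl⟩⟩, hlt⟩
  · have hrn : ∃ m, h σ.rhs = Val.null m := by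
      cases hcl : h σ.lhs with
      | null n => exact absurd ⟨n, hcl⟩ hln
      | const c =>
        cases hcr : h σ.rhs with
        | null m => exact ⟨m, rfl⟩
        | const d =>
          exfalso
          rw [hcl, hcr, inv.hetac, inv.hetac] at hηeq
          exact hne (by rw [hcl, hcr, hηeq])
    have hlvlk : s.lvl (h σ.lhs) ≤ s.lvl (h σ.rhs) := by
      cases hcl : h σ.lhs with
      | null n => exact absurd ⟨n, hcl⟩ hln
      | const c => rw [inv.hlvlc]; omega
    obtain ⟨hinv', hlt⟩ := collapse_state inv hrn hrada hlada hlvlk hηeq hne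
    exact ⟨_, hinv', ⟨h, hb, hne, Or.inr ⟨hrn, rfl⟩⟩, hlt⟩

lemma gned_fire {I : Inst M.S} (hvb : M.ValidBase I) {s : GState M} (inv : GInv M I s)
    {v : M.views.idx} {h : ℕ → Val} (hb : BodyHolds h (M.views.defn v).body s.J)
    (hvio : ∀ t ∈ M.mv.rels v, ∃ i, headVals (M.views.defn v) h i ≠ t i) :
    ∃ s' : GState M, GInv M I s' ∧ M.mvStep (some s.J) (some s'.J) ∧
      VecLt (meas s') (meas s) := by
  set vals : Fin (M.views.arity v) → Val := headVals (M.views.defn v) h with hvalsdef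
  set timg : Fin (M.views.arity v) → Val :=
    fun i => Term.eval (fun x => s.eta (h x)) ((M.views.defn v).head i) with htimgdef
  have htmem : timg ∈ M.mv.rels v := trigger_to_mv hvb inv hb
  have htη : ∀ i, timg i = s.eta (vals i) := fun i => term_eval_comp inv.hetac h _
  have htconst : ∀ i, (timg i).IsConst := fun i => M.mvGround v timg htmem i
  have hnonempty : (M.mv.rels v).Nonempty := ⟨timg, htmem⟩
  obtain ⟨j0, hj0⟩ := hvio timg htmem
  have harity : 1 ≤ M.views.arity v := j0.pos
  set ρ : Val → Val := fun a => if ha : ∃ j, a = vals j then timg (choose ha) else a with hρ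
  have hρval : ∀ j, ρ (vals j) = timg j := by
    intro j
    have hex : ∃ j', vals j = vals j' := ⟨j, rfl⟩
    rw [hρ]
    simp only [dif_pos hex]
    rw [htη (choose hex), htη j, ← choose_spec hex]
  have hρcase : ∀ a, ρ a = a ∨ ∃ j, a = vals j ∧ ρ a = timg j := by
    intro a
    by_cases ha : ∃ j, a = vals j
    · obtain ⟨j, hj⟩ := ha
      refine Or.inr ⟨j, hj, ?_⟩
      rw [hj]
      exact hρval j
    · exact Or.inl (by rw [hρ]; simp only [dif_neg ha])
  have hρc : ∀ c, ρ (Val.const c) = Val.const c := by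
    intro c
    rcases hρcase (Val.const c) with h1 | ⟨j, hj, h2⟩
    · exact h1
    · rw [h2, htη j, ← hj, inv.hetac]
  have hρeta : ∀ a, s.eta (ρ a) = s.eta a := by
    intro a
    rcases hρcase a with h1 | ⟨j, hj, h2⟩
    · rw [h1]
    · obtain ⟨c, hcc⟩ := htconst j
      rw [h2, hj, ← htη j, hcc]
      exact inv.hetac c
  have ha0null : ∃ n, vals j0 = Val.null n := by
    cases hc : vals j0 with
    | null n => exact ⟨n, rfl⟩
    | const c =>
      exfalso
      apply hj0
      rw [htη j0, hc, inv.hetac, ← hc]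
  have ha0adom : vals j0 ∈ s.J.adom := by
    cases hh : (M.views.defn v).head j0 with
    | var x =>
      have hx : x ∈ BodyVars (M.views.defn v).body := by
        obtain ⟨A, hA, j, hj⟩ := (M.views.safe v).2 x ⟨j0, hh⟩
        exact ⟨A, hA, j, hj⟩
      have : vals j0 = h x := by
        rw [hvalsdef]
        show Term.eval h ((M.views.defn v).head j0) = h x
        rw [hh]
        rfl
      rw [this]
      exact trigger_val_mem_adom hb hx
    | const c =>
      exfalso
      obtain ⟨n, hn⟩ := ha0null
      have : vals j0 = Val.const c := by
        rw [hvalsdef]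
        show Term.eval h ((M.views.defn v).head j0) = Val.const c
        rw [hh]
        rfl
      rw [this] at hn
      exact Val.noConfusion hn
  have hρnota0 : ∀ b, ρ b ≠ vals j0 := by
    intro b hbe
    rcases hρcase b with h1 | ⟨j, hj, h2⟩
    · rw [h1] at hbe
      subst hbe
      rw [hρval j0] at h1
      exact hj0 h1.symm
    · rw [h2] at hbe
      obtain ⟨c, hcc⟩ := htconst j
      obtain ⟨n, hn⟩ := ha0null
      rw [hcc, hn] at hbe
      exact Val.noConfusion hbe
  set s' : GState M := ⟨s.J.map ρ, s.eta, s.lvl, s.Used, s.Fired⟩ with hs'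
  have hadom' : (s.J.map ρ).adom = ρ '' s.J.adom := adom_map ρ s.J
  have hinv' : GInv M I s' := by
    refine ⟨inv.hfin.image _, inv.hetac, ?_, inv.husedfin, ?_, inv.hmvused, inv.hlvlc, ?_,
      inv.hfired, ?_⟩
    · rintro p hp
      rw [show s'.J.facts = (s.J.map ρ).facts from rfl, map_facts] at hp
      obtain ⟨q, hq, rfl⟩ := hp
      have he : (fun i => s.eta (ρ (q.2 i))) = fun i => s.eta (q.2 i) :=
        funext fun i => hρeta (q.2 i)
      show (⟨q.1, fun i => s.eta (ρ (q.2 i))⟩ : Fact M.S) ∈ I.facts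
      rw [he]
      exact inv.hhom q hq
    · intro a ha
      rw [show s'.J.adom = (s.J.map ρ).adom from rfl, hadom'] at ha
      obtain ⟨b, hb2, rfl⟩ := ha
      rcases hρcase b with h1 | ⟨j, hj, h2⟩
      · rw [h1]; exact inv.hadom hb2
      · rw [h2]; exact inv.hmvused v timg htmem j
    · rintro p hp i
      rw [show s'.J.facts = (s.J.map ρ).facts from rfl, map_facts] at hp
      obtain ⟨q, hq, rfl⟩ := hp
      show s.lvl (ρ (q.2 i)) ≤ _
      rcases hρcase (q.2 i) with h1 | ⟨j, hj, h2⟩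
      · rw [h1]; exact inv.hposlvl q hq i
      · obtain ⟨c, hcc⟩ := htconst j
        rw [h2, hcc, inv.hlvlc]
        exact Nat.zero_le _
    · rintro e he
      rcases inv.hfiredsat e he with ⟨x, hx, hnot, hnull⟩ | ⟨g, hga, hgh⟩
      · refine Or.inl ⟨x, hx, ?_, hnull⟩
        intro hmem
        rw [show s'.J.adom = (s.J.map ρ).adom from rfl, hadom'] at hmem
        obtain ⟨b, hb2, hbe⟩ := hmem
        rcases hρcase b with h1 | ⟨j, hj, h2⟩
        · rw [h1] at hbe; rw [← hbe] at hnot; exact hnot hb2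
        · rw [h2] at hbe
          obtain ⟨c, hcc⟩ := htconst j
          obtain ⟨n, hn⟩ := hnull
          rw [hcc, hn] at hbe
          exact Val.noConfusion hbe
      · by_cases hch : ∃ x ∈ sharedVars e.1, ρ (e.2 x) ≠ e.2 x
        · obtain ⟨x, hx, hchx⟩ := hch
          have hxnull : ∃ n, e.2 x = Val.null n := by
            cases hcx : e.2 x with
            | null n => exact ⟨n, rfl⟩
            | const c =>
              exfalso
              apply hchx
              rw [hcx]
              exact hρc c
          refine Or.inl ⟨x, hx, ?_, hxnull⟩
          intro hmem
          rw [show s'.J.adom = (s.J.map ρ).adom from rfl, hadom'] at hmem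
          obtain ⟨b, hb2, hbe⟩ := hmem
          rcases hρcase b with h1 | ⟨j, hj, h2⟩
          · rw [h1] at hbe
            subst hbe
            exact hchx h1
          · rw [h2] at hbe
            obtain ⟨c, hcc⟩ := htconst j
            obtain ⟨n, hn⟩ := hxnull
            rw [hcc] at hbe
            rw [← hbe] at hn
            exact Val.noConfusion hn
        · push_neg at hch
          refine Or.inr ⟨fun x => ρ (g x), fun x hx => ?_, bodyHolds_map hρc hgh⟩
          show ρ (g x) = e.2 x
          rw [hga x hx]
          exact hch x hx
  have hstep : M.mvStep (some s.J) (some s'.J) := by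
    refine ⟨M.gedResults v s.J h, ?_, ?_⟩
    · exact Or.inr (Or.inr (Or.inr (Or.inr ⟨v, hnonempty, harity, h, hb, hvio, rfl⟩)))
    · refine Or.inl ⟨timg, htmem, s.J.map ρ, rfl, ρ, hρc, ?_, hρval, rfl⟩
      intro a hna
      rw [hρ]
      exact dif_neg (fun hc => by obtain ⟨j, hj⟩ := hc; exact hna j hj)
  refine ⟨s', hinv', hstep, ?_⟩
  refine meas_lt_of_nullCount rfl rfl rfl ?_
  refine nullCount_lt inv.hfin (rem := vals j0) ?_ ha0adom ha0null
  rintro a ⟨ha, hn⟩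
  rw [show s'.J.adom = (s.J.map ρ).adom from rfl, hadom'] at ha
  obtain ⟨b, hb2, rfl⟩ := ha
  refine ⟨⟨?_, hn⟩, fun hbm => hρnota0 b (by simpa using hbm)⟩
  rcases hρcase b with h1 | ⟨j, hj, h2⟩
  · rw [h1]; exact hb2
  · exfalso
    obtain ⟨n, hneq⟩ := hn
    obtain ⟨c, hcc⟩ := htconst j
    rw [h2, hcc] at hneq
    exact Val.noConfusion hneq


end OtherFires
section MainEngine

open Classical

variable {M : MVSetting}

lemma engine_b {I : Inst M.S} (hwa : WeaklyAcyclic M.deps) (hvb : M.ValidBase I) :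
    ∀ s : GState M, GInv M I s →
      ∃ s' : GState M, GInv M I s' ∧ Relation.ReflTransGen (depStepTo M.deps) s.J s'.J ∧
        s'.J.satisfiesAll M.deps := by
  suffices key : ∀ vec : Fin (measN M) → ℕ, ∀ s : GState M, meas s = vec → GInv M I s →
      ∃ s' : GState M, GInv M I s' ∧ Relation.ReflTransGen (depStepTo M.deps) s.J s'.J ∧
        s'.J.satisfiesAll M.deps by
    exact fun s hs => key (meas s) s rfl hs
  intro vec
  refine WellFounded.induction (vecLt_wf (measN M))
    (C := fun vec => ∀ s : GState M, meas s = vec → GInv M I s →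
      ∃ s' : GState M, GInv M I s' ∧ Relation.ReflTransGen (depStepTo M.deps) s.J s'.J ∧
        s'.J.satisfiesAll M.deps) vec ?_
  intro v ih s hms hinv
  subst hms
  by_cases hsat : s.J.satisfiesAll M.deps
  · exact ⟨s, hinv, Relation.ReflTransGen.refl, hsat⟩
  · have hex : ∃ d ∈ M.deps, ¬ d.holds s.J := by
      by_contra hno
      push_neg at hno
      exact hsat hno
    obtain ⟨d, hd, hnh⟩ := hex
    cases d with
    | tgd σ =>
      have hvio : ∃ ν, BodyHolds ν σ.body s.J ∧
          ¬∃ ν' : ℕ → Val, (∀ x ∈ BodyVars σ.body, ν' x = ν x) ∧ BodyHolds ν' σ.head s.J := by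
        by_contra hno
        push_neg at hno
        exact hnh (fun ν hb => hno ν hb)
      obtain ⟨ν, hb, hns⟩ := hvio
      obtain ⟨s', hinv', hstep, hlt⟩ := tgd_fire hwa hvb hinv hd hb hns
      obtain ⟨s'', hinv'', hrtg, hsat''⟩ := ih (meas s') hlt s' rfl hinv'
      exact ⟨s'', hinv'', Relation.ReflTransGen.head (Or.inl ⟨σ, hd, hstep⟩) hrtg, hsat''⟩
    | egd σ =>
      have hvio : ∃ ν, BodyHolds ν σ.body s.J ∧ ν σ.lhs ≠ ν σ.rhs := by
        by_contra hno
        push_neg at hno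
        exact hnh (fun ν hb => hno ν hb)
      obtain ⟨ν, hb, hne⟩ := hvio
      obtain ⟨s', hinv', hstep, hlt⟩ := egd_fire hvb hinv hd hb hne
      obtain ⟨s'', hinv'', hrtg, hsat''⟩ := ih (meas s') hlt s' rfl hinv'
      exact ⟨s'', hinv'', Relation.ReflTransGen.head (Or.inr ⟨σ, hd, hstep⟩) hrtg, hsat''⟩

lemma engine_c {I : Inst M.S} (hwa : WeaklyAcyclic M.deps) (hvb : M.ValidBase I) :
    ∀ s : GState M, GInv M I s →
      ∃ s' : GState M, GInv M I s' ∧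
        Relation.ReflTransGen (fun J J' : Inst M.S => M.mvStep (some J) (some J')) s.J s'.J ∧
        M.mvChaseSteps (some s'.J) = ∅ := by
  suffices key : ∀ vec : Fin (measN M) → ℕ, ∀ s : GState M, meas s = vec → GInv M I s →
      ∃ s' : GState M, GInv M I s' ∧
        Relation.ReflTransGen (fun J J' : Inst M.S => M.mvStep (some J) (some J')) s.J s'.J ∧
        M.mvChaseSteps (some s'.J) = ∅ by
    exact fun s hs => key (meas s) s rfl hs
  intro vec
  refine WellFounded.induction (vecLt_wf (measN M))
    (C := fun vec => ∀ s : GState M, meas s = vec → GInv M I s →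
      ∃ s' : GState M, GInv M I s' ∧
        Relation.ReflTransGen (fun J J' : Inst M.S => M.mvStep (some J) (some J')) s.J s'.J ∧
        M.mvChaseSteps (some s'.J) = ∅) vec ?_
  intro v ih s hms hinv
  subst hms
  by_cases h1 : ∃ σ : TGD M.S, Dep.tgd σ ∈ M.deps ∧ ∃ ν, BodyHolds ν σ.body s.J ∧
      ¬∃ ν' : ℕ → Val, (∀ x ∈ BodyVars σ.body, ν' x = ν x) ∧ BodyHolds ν' σ.head s.J
  · obtain ⟨σ, hσ, ν, hb, hns⟩ := h1
    obtain ⟨s', hinv', hstep, hlt⟩ := tgd_fire hwa hvb hinv hσ hb hns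
    obtain ⟨s'', hinv'', hrtg, hleaf⟩ := ih (meas s') hlt s' rfl hinv'
    refine ⟨s'', hinv'', Relation.ReflTransGen.head ?_ hrtg, hleaf⟩
    exact ⟨{some s'.J}, Or.inl ⟨σ, hσ, s'.J, hstep, rfl⟩, rfl⟩
  · by_cases h2 : ∃ σ : EGD M.S, Dep.egd σ ∈ M.deps ∧
        ∃ ν, BodyHolds ν σ.body s.J ∧ ν σ.lhs ≠ ν σ.rhs
    · obtain ⟨σ, hσ, ν, hb, hne⟩ := h2
      obtain ⟨s', hinv', hstep, hlt⟩ := egd_fire hvb hinv hσ hb hne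
      obtain ⟨s'', hinv'', hrtg, hleaf⟩ := ih (meas s') hlt s' rfl hinv'
      refine ⟨s'', hinv'', Relation.ReflTransGen.head ?_ hrtg, hleaf⟩
      exact ⟨{some s'.J}, Or.inr (Or.inl ⟨σ, hσ, s'.J, hstep, rfl⟩), rfl⟩
    · by_cases h3 : ∃ (v : M.views.idx) (h : ℕ → Val),
          BodyHolds h (M.views.defn v).body s.J ∧
          ∀ t ∈ M.mv.rels v, ∃ i, headVals (M.views.defn v) h i ≠ t i
      · obtain ⟨w, h, hb, hvio⟩ := h3
        obtain ⟨s', hinv', hstep, hlt⟩ := gned_fire hvb hinv hb hvio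
        obtain ⟨s'', hinv'', hrtg, hleaf⟩ := ih (meas s') hlt s' rfl hinv'
        exact ⟨s'', hinv'', Relation.ReflTransGen.head hstep hrtg, hleaf⟩
      · refine ⟨s, hinv, Relation.ReflTransGen.refl, ?_⟩
        rw [Set.eq_empty_iff_forall_notMem]
        intro C hC
        rcases hC with ⟨σ, hσ, J', hstep, _⟩ | ⟨σ, hσ, J', hstep, _⟩ | ⟨σ, hσ, hf, _⟩ |
          ⟨w, hv, ⟨h, hb⟩, _⟩ | ⟨w, hvne, har, h, hb, hvio, _⟩
        · obtain ⟨h, hb, hns, _⟩ := hstep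
          exact h1 ⟨σ, hσ, h, hb, hns⟩
        · obtain ⟨h, hb, hne, _⟩ := hstep
          exact h2 ⟨σ, hσ, h, hb, hne⟩
        · obtain ⟨h, hb, hne, _, _⟩ := hf
          exact h2 ⟨σ, hσ, h, hb, hne⟩
        · have hmem := trigger_to_mv hvb hinv hb
          rw [hv] at hmem
          exact Set.notMem_empty _ hmem
        · exact h3 ⟨w, h, hb, hvio⟩

/-- The forward direction of the main theorem. -/
lemma forward_direction (M : MVSetting) (hwa : WeaklyAcyclic M.deps) (hval : M.Valid) :
    { J | M.IsVVSolution J }.Nonempty := by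
  obtain ⟨I, hvb⟩ := hval
  obtain ⟨J0, η, hpre, hηc, hhom⟩ := presolution_exists M hvb
  have hfin0 : J0.facts.Finite := (goodInv_presolution hpre).1
  set s0 : GState M := ⟨J0, η, fun _ => 0, J0.adom ∪ M.mv.adom, ∅⟩ with hs0
  have hinv0 : GInv M I s0 := by
    refine ⟨hfin0, hηc, hhom, ?_, ?_, ?_, fun c => rfl, ?_, ?_, ?_⟩
    · exact (adom_finite hfin0).union (adom_finite M.mvFinite)
    · exact fun a ha => Or.inl ha
    · intro v t ht i
      exact Or.inr ⟨⟨v, t⟩, ht, i, rfl⟩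
    · intro p hp i; exact Nat.zero_le _
    · intro e he; exact absurd he (Set.notMem_empty _)
    · intro e he; exact absurd he (Set.notMem_empty _)
  obtain ⟨s1, hinv1, hrtg1, hsat1⟩ := engine_b hwa hvb s0 hinv0
  obtain ⟨s2, hinv2, hrtg2, hleaf2⟩ := engine_c hwa hvb s1 hinv1
  refine ⟨s2.J, s1.J, ⟨J0, hpre, hrtg1, hsat1⟩, ?_, hleaf2⟩
  exact Relation.ReflTransGen.lift (fun J => some J) (fun a b hr => hr) _ _ hrtg2

end MainEngine
theorem valid_iff_vv_nonempty (M : MVSetting) (hwa : WeaklyAcyclic M.deps) :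
    M.Valid ↔ { J | M.IsVVSolution J }.Nonempty := by
  exact ⟨forward_direction M hwa, backward_direction M⟩

end CertainViews
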